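/- Let μ ⊆ λ be partitions with at most k parts (λ = (λ_1, …, λ_k), μ = (μ_1, …, μ_k), allowing zero parts). Then s_{λ/μ} = det(h_{λ_i − μ_j − i + j})_{1 ≤ i,j ≤ k}, where h_r denotes the complete homogeneous symmetric function of degree r (the sum of all monomials of degree r in x_1, x_2, …), with h_0 = 1 and h_r = 0 for r < 0. -/

import Mathlib

noncomputable section

/-- A box in the plane: `(row, column)`, rows increasing downward (English notation). -/
abbrev Box : Type := ℤ × ℤ

/-- The content of a box `(i, j)` is `j - i`. -/
def boxContent (b : Box) : ℤ := b.2 - b.1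

/-- An integer partition, indexed from `1` (the value `part 0` is irrelevant). -/
structure Partition' where
  part : ℕ → ℕ
  antitone : ∀ ⦃i j : ℕ⦄, i ≤ j → part j ≤ part i
  eventually_zero : ∃ N : ℕ, ∀ i : ℕ, N ≤ i → part i = 0

/-- The skew diagram `λ/μ`: boxes `(i, j)` with `i ≥ 1` and `μ_i < j ≤ λ_i`. -/
def skewCells (lam mu : Partition') : Set Box :=
  {b : Box | 1 ≤ b.1 ∧ (mu.part b.1.toNat : ℤ) < b.2 ∧ b.2 ≤ (lam.part b.1.toNat : ℤ)}

/-- `D` is the set of boxes of a skew diagram `λ/μ` for some partitions `μ ⊆ λ`. -/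
def IsSkewShape (D : Set Box) : Prop :=
  ∃ lam mu : Partition', (∀ i, mu.part i ≤ lam.part i) ∧ D = skewCells lam mu

/-- Translate a set of boxes by a vector `v`. -/
def boxTranslate (v : Box) (D : Set Box) : Set Box := (fun b => b + v) '' D

/-- `D` is a translate of a skew diagram. -/
def IsSkewLike (D : Set Box) : Prop := ∃ v : Box, IsSkewShape (boxTranslate v D)

/-- Two boxes share a common edge. -/
def boxAdj (a b : Box) : Prop :=
  (a.1 = b.1 ∧ (a.2 = b.2 + 1 ∨ b.2 = a.2 + 1)) ∨
  (a.2 = b.2 ∧ (a.1 = b.1 + 1 ∨ b.1 = a.1 + 1))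

/-- Any two boxes of `D` are joined by a path of boxes of `D` in which consecutive
boxes share a common edge. -/
def EdgewiseConnected (D : Set Box) : Prop :=
  ∀ a ∈ D, ∀ b ∈ D, Relation.ReflTransGen (fun x y => x ∈ D ∧ y ∈ D ∧ boxAdj x y) a b

/-- `D` contains no `2 × 2` block of boxes. -/
def NoTwoByTwo (D : Set Box) : Prop :=
  ∀ b : Box, ¬(b ∈ D ∧ (b.1, b.2 + 1) ∈ D ∧ (b.1 + 1, b.2) ∈ D ∧ (b.1 + 1, b.2 + 1) ∈ D)

/-- A border strip (ribbon): a nonempty edgewise connected skew diagram (up to translation)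
containing no `2 × 2` block of boxes. -/
def IsBorderStrip (B : Set Box) : Prop :=
  B.Nonempty ∧ IsSkewLike B ∧ EdgewiseConnected B ∧ NoTwoByTwo B

/-- `b` is the starting box (lower-left end) of `B`: no box of `B` directly to its left
nor directly below it. -/
def IsStartBox (B : Set Box) (b : Box) : Prop :=
  b ∈ B ∧ (b.1, b.2 - 1) ∉ B ∧ (b.1 + 1, b.2) ∉ B

/-- `b` is the ending box (upper-right end) of `B`: no box of `B` directly above it
nor directly to its right. -/
def IsEndBox (B : Set Box) (b : Box) : Prop :=
  b ∈ B ∧ (b.1 - 1, b.2) ∉ B ∧ (b.1, b.2 + 1) ∉ B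

/-- The strip `B` has starting box of content `p` and ending box of content `q`. -/
def HasPQ (B : Set Box) (p q : ℤ) : Prop :=
  (∃ b : Box, IsStartBox B b ∧ boxContent b = p) ∧
  (∃ b : Box, IsEndBox B b ∧ boxContent b = q)

/-- An outside decomposition of `D`: a partition of the boxes of `D` into pairwise disjoint
border strips, each strip having its starting box on the left or bottom perimeter of `D` and
its ending box on the right or top perimeter of `D`. -/
def IsOutsideDecomposition (D : Set Box) (P : Set (Set Box)) : Prop :=
  (∀ θ ∈ P, IsBorderStrip θ ∧ θ ⊆ D) ∧
  (∀ b ∈ D, ∃! θ : Set Box, θ ∈ P ∧ b ∈ θ) ∧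
  (∀ θ ∈ P, ∀ b : Box, IsStartBox θ b → ((b.1, b.2 - 1) ∉ D ∨ (b.1 + 1, b.2) ∉ D)) ∧
  (∀ θ ∈ P, ∀ b : Box, IsEndBox θ b → ((b.1 - 1, b.2) ∉ D ∨ (b.1, b.2 + 1) ∉ D))

/-- The box `b` of `D` goes up in the outside decomposition `P`: in the strip of `P`
containing it, the next box is directly above it; an ending box goes up when no box of `D`
lies directly above it. -/
def GoesUp (D : Set Box) (P : Set (Set Box)) (b : Box) : Prop :=
  ∃ θ ∈ P, b ∈ θ ∧ ((b.1 - 1, b.2) ∈ θ ∨ (IsEndBox θ b ∧ (b.1 - 1, b.2) ∉ D))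

/-- The box `b` of `D` goes right in the outside decomposition `P`: in the strip of `P`
containing it, the next box is directly to its right; an ending box goes right when some box
of `D` lies directly above it. -/
def GoesRight (D : Set Box) (P : Set (Set Box)) (b : Box) : Prop :=
  ∃ θ ∈ P, b ∈ θ ∧ ((b.1, b.2 + 1) ∈ θ ∨ (IsEndBox θ b ∧ (b.1 - 1, b.2) ∈ D))

/-- `T` is a cutting strip of the outside decomposition `P` of `D`: a border strip whose
boxes are labeled by the contents of `D` (each content appearing once), in which the box
labeled `c` goes up or goes right according as the boxes of the diagonal of content `c`
of `D` go up or go right in `P`. -/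
def IsCuttingStripOf (D : Set Box) (P : Set (Set Box)) (T : Set Box) : Prop :=
  IsBorderStrip T ∧ boxContent '' T = boxContent '' D ∧
  ∀ b ∈ T, ∀ c ∈ D, boxContent c = boxContent b →
    (((b.1 - 1, b.2) ∈ T → GoesUp D P c) ∧ ((b.1, b.2 + 1) ∈ T → GoesRight D P c))

/-- The segment `φ[p, q]` of a strip `T`: its boxes of content between `p` and `q`. -/
def stripSegment (T : Set Box) (p q : ℤ) : Set Box :=
  {b ∈ T | p ≤ boxContent b ∧ boxContent b ≤ q}

/-- The box of content `c` of the strip `T` goes up (the next box is directly above it). -/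
def StripGoesUpAt (T : Set Box) (c : ℤ) : Prop :=
  ∃ b ∈ T, boxContent b = c ∧ (b.1 - 1, b.2) ∈ T

/-- The box of content `c` of the strip `T` goes right (the next box is directly right of it). -/
def StripGoesRightAt (T : Set Box) (c : ℤ) : Prop :=
  ∃ b ∈ T, boxContent b = c ∧ (b.1, b.2 + 1) ∈ T

/-- `T'` is obtained from the strip `T` by reversing the direction (up versus right) of the
box labeled `i`, keeping the directions of all other boxes. -/
def IsTwist (i : ℤ) (T T' : Set Box) : Prop :=
  boxContent '' T' = boxContent '' T ∧
  (∀ c : ℤ, c ≠ i → (StripGoesUpAt T c ↔ StripGoesUpAt T' c)) ∧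
  (StripGoesUpAt T i ↔ StripGoesRightAt T' i)

/-- The inversion number of an outside decomposition: the number of ordered pairs of
strips `(θ₁, θ₂)` with `p(θ₁) > p(θ₂)` and `q(θ₁) < q(θ₂)`. -/
def invOD (P : Set (Set Box)) : ℕ :=
  {θθ : Set Box × Set Box | θθ.1 ∈ P ∧ θθ.2 ∈ P ∧
    ∃ p₁ q₁ p₂ q₂ : ℤ, HasPQ θθ.1 p₁ q₁ ∧ HasPQ θθ.2 p₂ q₂ ∧ p₂ < p₁ ∧ q₁ < q₂}.ncard

/-- A semistandard Young tableau of shape `D`: entries (variable indices) weakly increase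
along rows and strictly increase down columns; entries outside `D` are normalized to `0`. -/
def IsSSYT (D : Set Box) (T : Box → ℕ) : Prop :=
  (∀ b ∈ D, (b.1, b.2 + 1) ∈ D → T b ≤ T (b.1, b.2 + 1)) ∧
  (∀ b ∈ D, (b.1 + 1, b.2) ∈ D → T b < T (b.1 + 1, b.2)) ∧
  (∀ b : Box, b ∉ D → T b = 0)

/-- The skew Schur function of a skew diagram `D`, as a formal power series in the
variables `x_n` (`n : ℕ`): the coefficient of a monomial `μ` is the number of semistandard
Young tableaux of shape `D` using each variable `n` exactly `μ n` times. -/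
def schur (D : Set Box) : MvPowerSeries ℕ ℤ :=
  fun μ => ({T : Box → ℕ | IsSSYT D T ∧ ∀ n : ℕ, μ n = {b ∈ D | T b = n}.ncard}.ncard : ℤ)

/-- `b` is the upper-right corner box of `D`: the rightmost box of the top row. -/
def IsUpperRightCorner (D : Set Box) (b : Box) : Prop :=
  b ∈ D ∧ (∀ c ∈ D, b.1 ≤ c.1) ∧ ∀ c ∈ D, c.1 = b.1 → c.2 ≤ b.2

/-- `b` is the lower-left corner box of `D`: the leftmost box of the bottom row. -/
def IsLowerLeftCorner (D : Set Box) (b : Box) : Prop :=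
  b ∈ D ∧ (∀ c ∈ D, c.1 ≤ b.1) ∧ ∀ c ∈ D, c.1 = b.1 → b.2 ≤ c.2

/-- The block (edgewise connected component) of `D` containing the box `a`. -/
def blockOf (D : Set Box) (a : Box) : Set Box :=
  {b : Box | Relation.ReflTransGen (fun x y => x ∈ D ∧ y ∈ D ∧ boxAdj x y) a b}

/-- The complete homogeneous symmetric function `h_r` (`h_0 = 1`, `h_r = 0` for `r < 0`):
the sum of all monomials of degree `r`. -/
def hSym (r : ℤ) : MvPowerSeries ℕ ℤ :=
  fun μ => if ((μ.sum fun _ e => e : ℕ) : ℤ) = r then 1 else 0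

/-- The elementary symmetric function `e_r` (`e_0 = 1`, `e_r = 0` for `r < 0`):
the sum of all squarefree monomials of degree `r`. -/
def eSym (r : ℤ) : MvPowerSeries ℕ ℤ :=
  fun μ => if (∀ n ∈ μ.support, μ n = 1) ∧ ((μ.sum fun _ e => e : ℕ) : ℤ) = r then 1 else 0

/-- The `j`-th part (`j ≥ 1`) of the conjugate partition: the number of indices `i ≥ 1`
with `λ_i ≥ j`. -/
def conjPart (lam : Partition') (j : ℕ) : ℕ := {i : ℕ | 1 ≤ i ∧ j ≤ lam.part i}.ncard

/-- The order on the supersymmetric alphabet `x_0 < x_1 < ⋯ < y_0 < y_1 < ⋯`,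
with `Sum.inl n` representing `x_n` and `Sum.inr n` representing `y_n`. -/
def entryLE : ℕ ⊕ ℕ → ℕ ⊕ ℕ → Prop
  | Sum.inl a, Sum.inl b => a ≤ b
  | Sum.inl _, Sum.inr _ => True
  | Sum.inr _, Sum.inl _ => False
  | Sum.inr a, Sum.inr b => a ≤ b

/-- A super tableau of shape `D`: rows and columns weakly increase, the `x`-symbols
strictly increase down columns, the `y`-symbols strictly increase along rows; entries
outside `D` are normalized to `Sum.inl 0`. -/
def IsSuperSSYT (D : Set Box) (T : Box → ℕ ⊕ ℕ) : Prop :=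
  (∀ b ∈ D, (b.1, b.2 + 1) ∈ D → entryLE (T b) (T (b.1, b.2 + 1))) ∧
  (∀ b ∈ D, (b.1 + 1, b.2) ∈ D → entryLE (T b) (T (b.1 + 1, b.2))) ∧
  (∀ b ∈ D, (b.1 + 1, b.2) ∈ D →
    ∀ a c : ℕ, T b = Sum.inl a → T (b.1 + 1, b.2) = Sum.inl c → a < c) ∧
  (∀ b ∈ D, (b.1, b.2 + 1) ∈ D →
    ∀ a c : ℕ, T b = Sum.inr a → T (b.1, b.2 + 1) = Sum.inr c → a < c) ∧
  (∀ b : Box, b ∉ D → T b = Sum.inl 0)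

/-- The supersymmetric skew Schur function `s_D(X, Y)`, as a formal power series in the
variables `x_n, y_n`: the coefficient of a monomial `μ` is the number of super tableaux
of shape `D` using each symbol `v` exactly `μ v` times. -/
def superSchur (D : Set Box) : MvPowerSeries (ℕ ⊕ ℕ) ℤ :=
  fun μ =>
    ({T : Box → ℕ ⊕ ℕ | IsSuperSSYT D T ∧
        ∀ v : ℕ ⊕ ℕ, μ v = {b ∈ D | T b = v}.ncard}.ncard : ℤ)

namespace JT
open Finset

attribute [local instance] Classical.propDecidable

def uu (mu : Partition') (k : ℕ) (j : Fin k) : ℤ := (mu.part (j.1+1) : ℤ) - (j.1+1)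
def vv (lam : Partition') (k : ℕ) (j : Fin k) : ℤ := (lam.part (j.1+1) : ℤ) - (j.1+1)

def degOK (k : ℕ) (lam mu : Partition') (σ : Equiv.Perm (Fin k)) (l : Fin k → (ℕ →₀ ℕ)) : Prop :=
  ∀ j, (((l j).sum fun _ e => e : ℕ) : ℤ) = vv lam k (σ j) - uu mu k j

lemma coeff_hSym (d : ℕ →₀ ℕ) (r : ℤ) :
    MvPowerSeries.coeff d (hSym r) = if ((d.sum fun _ e => e : ℕ) : ℤ) = r then 1 else 0 := rfl

theorem coeff_det (k : ℕ) (lam mu : Partition') (μ0 : ℕ →₀ ℕ) :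
    MvPowerSeries.coeff μ0 (Matrix.det (Matrix.of fun i j : Fin k =>
        hSym ((lam.part ((i : ℕ) + 1) : ℤ) - (mu.part ((j : ℕ) + 1) : ℤ)
          - ((i : ℕ) + 1 : ℤ) + ((j : ℕ) + 1 : ℤ)))) =
    ∑ σ : Equiv.Perm (Fin k), (Equiv.Perm.sign σ : ℤ) *
      (((Finset.univ : Finset (Fin k)).finsuppAntidiag μ0).filter
        (fun l : Fin k →₀ (ℕ →₀ ℕ) => degOK k lam mu σ l)).card := by
  classical
  rw [Matrix.det_apply, map_sum]
  refine Finset.sum_congr rfl fun σ _ => ?_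
  rw [Units.smul_def, map_smul, smul_eq_mul]
  congr 1
  rw [MvPowerSeries.coeff_prod]
  have h1 : ∀ l ∈ (Finset.univ : Finset (Fin k)).finsuppAntidiag μ0,
      (∏ i : Fin k, MvPowerSeries.coeff (l i)
        ((Matrix.of fun i j : Fin k =>
          hSym ((lam.part ((i : ℕ) + 1) : ℤ) - (mu.part ((j : ℕ) + 1) : ℤ)
            - ((i : ℕ) + 1 : ℤ) + ((j : ℕ) + 1 : ℤ))) (σ i) i)) =
      if degOK k lam mu σ (l : Fin k → ℕ →₀ ℕ) then 1 else 0 := by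
    intro l _
    have h2 : ∀ i : Fin k, MvPowerSeries.coeff (l i)
        ((Matrix.of fun i j : Fin k =>
          hSym ((lam.part ((i : ℕ) + 1) : ℤ) - (mu.part ((j : ℕ) + 1) : ℤ)
            - ((i : ℕ) + 1 : ℤ) + ((j : ℕ) + 1 : ℤ))) (σ i) i) =
        if (((l i).sum fun _ e => e : ℕ) : ℤ) = vv lam k (σ i) - uu mu k i then 1 else 0 := by
      intro i
      rw [Matrix.of_apply, coeff_hSym]
      congr 1
      simp only [uu, vv]
      rw [eq_iff_iff]; constructor <;> intro h <;> linarith [h]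
    rw [Finset.prod_congr rfl (fun i _ => h2 i), Finset.prod_boole]
    simp [degOK]
  rw [Finset.sum_congr rfl h1, Finset.sum_boole]

variable {k : ℕ} (mu : Partition')

def G (l : Fin k → (ℕ →₀ ℕ)) (j : Fin k) (t : ℕ) : ℤ :=
  uu mu k j + ∑ s ∈ Finset.range t, ((l j) s : ℤ)

def Iv (l : Fin k → (ℕ →₀ ℕ)) (j : Fin k) (t : ℕ) (x : ℤ) : Prop :=
  G mu l j t ≤ x ∧ x ≤ G mu l j (t+1)

def SharedX (l : Fin k → (ℕ →₀ ℕ)) (t : ℕ) (x : ℤ) : Prop :=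
  ∃ a b : Fin k, a ≠ b ∧ Iv mu l a t x ∧ Iv mu l b t x

def CrossAt (l : Fin k → (ℕ →₀ ℕ)) (t : ℕ) : Prop := ∃ x : ℤ, SharedX mu l t x

def Cross (l : Fin k → (ℕ →₀ ℕ)) : Prop := ∃ t : ℕ, CrossAt mu l t

variable {mu}

lemma G_succ (l : Fin k → (ℕ →₀ ℕ)) (j : Fin k) (t : ℕ) :
    G mu l j (t+1) = G mu l j t + ((l j) t : ℤ) := by
  simp [G, Finset.sum_range_succ, add_assoc]

lemma G_mono (l : Fin k → (ℕ →₀ ℕ)) (j : Fin k) : Monotone (G mu l j) := by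
  intro t t' h
  simp only [G, add_le_add_iff_left]
  exact Finset.sum_le_sum_of_subset_of_nonneg (by simpa using h) (by intros; positivity)

section InvDef
variable (mu) (l : Fin k → (ℕ →₀ ℕ))

/-- height of the first shared vertex -/
def t0 (hc : Cross mu l) : ℕ := Nat.find hc

lemma crossAt_t0 (hc : Cross mu l) : CrossAt mu l (t0 mu l hc) := Nat.find_spec hc

lemma not_crossAt_lt (hc : Cross mu l) {t : ℕ} (ht : t < t0 mu l hc) : ¬ CrossAt mu l t := Nat.find_min hc ht

lemma nonemptyFin (hc : Cross mu l) : Nonempty (Fin k) := by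
  obtain ⟨x, a, _, _⟩ := crossAt_t0 mu l hc; exact ⟨a⟩

def lo (hc : Cross mu l) : ℤ :=
  haveI := nonemptyFin mu l hc
  Finset.univ.inf' (Finset.univ_nonempty) (fun a => G mu l a (t0 mu l hc))

lemma exX (hc : Cross mu l) : ∃ n : ℕ, SharedX mu l (t0 mu l hc) (lo mu l hc + n) := by
  obtain ⟨x, hx⟩ := crossAt_t0 mu l hc
  have hxlo : lo mu l hc ≤ x := by
    obtain ⟨a, b, hab, ha, hb⟩ := hx
    refine le_trans ?_ ha.1
    haveI := nonemptyFin mu l hc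
    exact Finset.inf'_le _ (mem_univ a)
  refine ⟨(x - lo mu l hc).toNat, ?_⟩
  rwa [Int.toNat_of_nonneg (by omega), add_sub_cancel]

/-- column of the first shared vertex -/
def x0 (hc : Cross mu l) : ℤ := lo mu l hc + Nat.find (exX mu l hc)

lemma sharedX_x0 (hc : Cross mu l) : SharedX mu l (t0 mu l hc) (x0 mu l hc) := Nat.find_spec (exX mu l hc)

lemma x0_min (hc : Cross mu l) {x : ℤ} (hx : SharedX mu l (t0 mu l hc) x) : x0 mu l hc ≤ x := by
  have hxlo : lo mu l hc ≤ x := by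
    obtain ⟨a, b, hab, ha, hb⟩ := hx
    refine le_trans ?_ ha.1
    haveI := nonemptyFin mu l hc
    exact Finset.inf'_le _ (mem_univ a)
  have : ¬ ((x - lo mu l hc).toNat < Nat.find (exX mu l hc)) := by
    intro hlt
    exact Nat.find_min (exX mu l hc) hlt
      (by rwa [Int.toNat_of_nonneg (by omega), add_sub_cancel])
  simp only [x0]
  omega
end InvDef

section SwapDef
variable (mu : Partition') (l : Fin k → (ℕ →₀ ℕ))

def S0 (hc : Cross mu l) : Finset (Fin k) :=
  Finset.univ.filter (fun a => Iv mu l a (t0 mu l hc) (x0 mu l hc))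

lemma S0_pair (hc : Cross mu l) :
    ∃ a b : Fin k, a ≠ b ∧ a ∈ S0 mu l hc ∧ b ∈ S0 mu l hc := by
  obtain ⟨a, b, hab, ha, hb⟩ := sharedX_x0 mu l hc
  exact ⟨a, b, hab, by simp [S0, ha], by simp [S0, hb]⟩

lemma S0_nonempty (hc : Cross mu l) : (S0 mu l hc).Nonempty := by
  obtain ⟨a, _, _, ha, _⟩ := S0_pair mu l hc; exact ⟨a, ha⟩

def j1 (hc : Cross mu l) : Fin k := (S0 mu l hc).min' (S0_nonempty mu l hc)

lemma erase_nonempty (hc : Cross mu l) :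
    ((S0 mu l hc).erase (j1 mu l hc)).Nonempty := by
  obtain ⟨a, b, hab, ha, hb⟩ := S0_pair mu l hc
  rcases eq_or_ne a (j1 mu l hc) with h | h
  · exact ⟨b, Finset.mem_erase.2 ⟨by rw [← h]; exact hab.symm, hb⟩⟩
  · exact ⟨a, Finset.mem_erase.2 ⟨h, ha⟩⟩

def j2 (hc : Cross mu l) : Fin k :=
  ((S0 mu l hc).erase (j1 mu l hc)).min' (erase_nonempty mu l hc)

lemma j1_mem (hc : Cross mu l) : j1 mu l hc ∈ S0 mu l hc :=
  (S0 mu l hc).min'_mem _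

lemma j2_mem (hc : Cross mu l) : j2 mu l hc ∈ S0 mu l hc :=
  (Finset.mem_erase.1 (((S0 mu l hc).erase (j1 mu l hc)).min'_mem _)).2

lemma j2_ne_j1 (hc : Cross mu l) : j2 mu l hc ≠ j1 mu l hc :=
  (Finset.mem_erase.1 (((S0 mu l hc).erase (j1 mu l hc)).min'_mem _)).1

lemma mem_S0_iff (hc : Cross mu l) (a : Fin k) :
    a ∈ S0 mu l hc ↔
      G mu l a (t0 mu l hc) ≤ x0 mu l hc ∧ x0 mu l hc ≤ G mu l a (t0 mu l hc + 1) := by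
  exact ⟨fun h => (Finset.mem_filter.1 h).2, fun h => Finset.mem_filter.2 ⟨Finset.mem_univ _, h⟩⟩

/-- the new row at the position of `a`, following `a` up to height `t0` and `b` above. -/
def nswap (hc : Cross mu l) (a b : Fin k) : ℕ →₀ ℕ :=
  Finsupp.onFinset ((l a).support ∪ (l b).support ∪ {t0 mu l hc})
    (fun s => if s < t0 mu l hc then l a s else if s = t0 mu l hc then
      (G mu l b (t0 mu l hc + 1) - G mu l a (t0 mu l hc)).toNat else l b s)
    (by
      intro s hs
      simp only [Finset.mem_union, Finset.mem_singleton, Finsupp.mem_support_iff]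
      rcases lt_trichotomy s (t0 mu l hc) with h | h | h
      · rw [if_pos h] at hs; tauto
      · tauto
      · rw [if_neg (by omega), if_neg (by omega)] at hs; tauto)

lemma nswap_apply (hc : Cross mu l) (a b : Fin k) (s : ℕ) :
    nswap mu l hc a b s = if s < t0 mu l hc then l a s else if s = t0 mu l hc then
      (G mu l b (t0 mu l hc + 1) - G mu l a (t0 mu l hc)).toNat else l b s := rfl

def swapl (hc : Cross mu l) : Fin k → (ℕ →₀ ℕ) :=
  Function.update (Function.update l (j1 mu l hc)
    (nswap mu l hc (j1 mu l hc) (j2 mu l hc))) (j2 mu l hc)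
    (nswap mu l hc (j2 mu l hc) (j1 mu l hc))

lemma swapl_apply_ne (hc : Cross mu l) (a : Fin k) (h1 : a ≠ j1 mu l hc)
    (h2 : a ≠ j2 mu l hc) : swapl mu l hc a = l a := by
  simp [swapl, Function.update_of_ne h2, Function.update_of_ne h1]

lemma swapl_apply_j1 (hc : Cross mu l) :
    swapl mu l hc (j1 mu l hc) = nswap mu l hc (j1 mu l hc) (j2 mu l hc) := by
  simp [swapl, Function.update_of_ne (j2_ne_j1 mu l hc).symm]

lemma swapl_apply_j2 (hc : Cross mu l) :
    swapl mu l hc (j2 mu l hc) = nswap mu l hc (j2 mu l hc) (j1 mu l hc) := by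
  simp [swapl]

end SwapDef

section SwapLemmas
variable (mu : Partition') (l : Fin k → (ℕ →₀ ℕ))

lemma G_diff (j : Fin k) {t t' : ℕ} (h : t ≤ t') :
    G mu l j t' = G mu l j t + ∑ s ∈ Finset.Ico t t', ((l j) s : ℤ) := by
  simp only [G, Finset.range_eq_Ico, add_assoc]
  rw [← Finset.sum_Ico_consecutive _ (Nat.zero_le t) h]

lemma hx1 (hc : Cross mu l) :
    G mu l (j1 mu l hc) (t0 mu l hc) ≤ x0 mu l hc ∧
      x0 mu l hc ≤ G mu l (j1 mu l hc) (t0 mu l hc + 1) :=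
  (mem_S0_iff mu l hc _).1 (j1_mem mu l hc)

lemma hx2 (hc : Cross mu l) :
    G mu l (j2 mu l hc) (t0 mu l hc) ≤ x0 mu l hc ∧
      x0 mu l hc ≤ G mu l (j2 mu l hc) (t0 mu l hc + 1) :=
  (mem_S0_iff mu l hc _).1 (j2_mem mu l hc)

lemma G_nswap_calc (hc : Cross mu l) (a b : Fin k)
    (hab : G mu l a (t0 mu l hc) ≤ G mu l b (t0 mu l hc + 1)) (t : ℕ) :
    uu mu k a + ∑ s ∈ Finset.range t, ((nswap mu l hc a b) s : ℤ) =
      if t ≤ t0 mu l hc then G mu l a t else G mu l b t := by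
  rcases le_or_gt t (t0 mu l hc) with h | h
  · rw [if_pos h]
    have he : ∀ s ∈ Finset.range t, ((nswap mu l hc a b) s : ℤ) = ((l a) s : ℤ) := by
      intro s hs
      rw [nswap_apply, if_pos (by simp only [Finset.mem_range] at hs; omega)]
    rw [Finset.sum_congr rfl he]; rfl
  · rw [if_neg (by omega)]
    have hsplit : ∑ s ∈ Finset.range t, ((nswap mu l hc a b) s : ℤ)
        = ∑ s ∈ Finset.range (t0 mu l hc + 1), ((nswap mu l hc a b) s : ℤ)
          + ∑ s ∈ Finset.Ico (t0 mu l hc + 1) t, ((nswap mu l hc a b) s : ℤ) := by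
      simp only [Finset.range_eq_Ico]
      exact (Finset.sum_Ico_consecutive _ (Nat.zero_le _) (by omega)).symm
    have h1 : ∑ s ∈ Finset.range (t0 mu l hc + 1), ((nswap mu l hc a b) s : ℤ)
        = (G mu l a (t0 mu l hc) - uu mu k a)
          + (G mu l b (t0 mu l hc + 1) - G mu l a (t0 mu l hc)) := by
      rw [Finset.sum_range_succ]
      congr 1
      · have he : ∀ s ∈ Finset.range (t0 mu l hc), ((nswap mu l hc a b) s : ℤ) = ((l a) s : ℤ) := by
          intro s hs
          rw [nswap_apply, if_pos (by simp only [Finset.mem_range] at hs; omega)]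
        rw [Finset.sum_congr rfl he]
        simp [G]
      · rw [nswap_apply, if_neg (lt_irrefl _), if_pos rfl,
          Int.toNat_of_nonneg (by omega)]
    have h2 : ∑ s ∈ Finset.Ico (t0 mu l hc + 1) t, ((nswap mu l hc a b) s : ℤ)
        = ∑ s ∈ Finset.Ico (t0 mu l hc + 1) t, ((l b) s : ℤ) := by
      refine Finset.sum_congr rfl fun s hs => ?_
      simp only [Finset.mem_Ico] at hs
      rw [nswap_apply, if_neg (by omega), if_neg (by omega)]
    have h3 := G_diff mu l b (show t0 mu l hc + 1 ≤ t by omega)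
    rw [hsplit, h1, h2]
    omega

lemma G_swapl (hc : Cross mu l) (a : Fin k) (t : ℕ) :
    G mu (swapl mu l hc) a t =
      if t ≤ t0 mu l hc then G mu l a t
      else G mu l (Equiv.swap (j1 mu l hc) (j2 mu l hc) a) t := by
  rcases eq_or_ne a (j1 mu l hc) with rfl | ha1
  · rw [show G mu (swapl mu l hc) (j1 mu l hc) t
        = uu mu k (j1 mu l hc) + ∑ s ∈ Finset.range t,
          ((nswap mu l hc (j1 mu l hc) (j2 mu l hc)) s : ℤ) by
        simp [G, swapl_apply_j1]]
    rw [G_nswap_calc mu l hc _ _ ((hx1 mu l hc).1.trans (hx2 mu l hc).2) t,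
      Equiv.swap_apply_left]
  rcases eq_or_ne a (j2 mu l hc) with rfl | ha2
  · rw [show G mu (swapl mu l hc) (j2 mu l hc) t
        = uu mu k (j2 mu l hc) + ∑ s ∈ Finset.range t,
          ((nswap mu l hc (j2 mu l hc) (j1 mu l hc)) s : ℤ) by
        simp [G, swapl_apply_j2]]
    rw [G_nswap_calc mu l hc _ _ ((hx2 mu l hc).1.trans (hx1 mu l hc).2) t,
      Equiv.swap_apply_right]
  · rw [show G mu (swapl mu l hc) a t = G mu l a t by
        simp [G, swapl_apply_ne mu l hc a ha1 ha2],
      Equiv.swap_apply_of_ne_of_ne ha1 ha2]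
    simp

lemma swapl_pointwise_sum (hc : Cross mu l) (s : ℕ) :
    ∑ a : Fin k, (swapl mu l hc a) s = ∑ a : Fin k, (l a) s := by
  have key : (nswap mu l hc (j1 mu l hc) (j2 mu l hc)) s
      + (nswap mu l hc (j2 mu l hc) (j1 mu l hc)) s
      = (l (j1 mu l hc)) s + (l (j2 mu l hc)) s := by
    rcases lt_trichotomy s (t0 mu l hc) with h | h | h
    · rw [nswap_apply, nswap_apply, if_pos h, if_pos h]
    · have e1 := (hx1 mu l hc).1.trans (hx2 mu l hc).2
      have e2 := (hx2 mu l hc).1.trans (hx1 mu l hc).2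
      have g1 := G_succ (mu := mu) l (j1 mu l hc) (t0 mu l hc)
      have g2 := G_succ (mu := mu) l (j2 mu l hc) (t0 mu l hc)
      rw [nswap_apply, nswap_apply, if_neg (by omega), if_pos h,
        if_neg (by omega), if_pos h]
      subst h
      omega
    · rw [nswap_apply, nswap_apply, if_neg (by omega), if_neg (by omega),
        if_neg (by omega), if_neg (by omega)]
      omega
  have hne : j1 mu l hc ≠ j2 mu l hc := (j2_ne_j1 mu l hc).symm
  rw [← Finset.sum_erase_add _ _ (Finset.mem_univ (j2 mu l hc)),
    ← Finset.sum_erase_add _ _ (Finset.mem_univ (j2 mu l hc)),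
    ← Finset.sum_erase_add _ _ (Finset.mem_erase.2 ⟨hne, Finset.mem_univ (j1 mu l hc)⟩),
    ← Finset.sum_erase_add _ _ (Finset.mem_erase.2 ⟨hne, Finset.mem_univ (j1 mu l hc)⟩)]
  have htail : ∀ a ∈ ((Finset.univ.erase (j2 mu l hc)).erase (j1 mu l hc)),
      (swapl mu l hc a) s = (l a) s := by
    intro a ha
    simp only [Finset.mem_erase] at ha
    rw [swapl_apply_ne mu l hc a ha.1 ha.2.1]
  rw [Finset.sum_congr rfl htail, swapl_apply_j1, swapl_apply_j2]
  omega

lemma sum_range_eq_deg (m : ℕ →₀ ℕ) (t : ℕ) (h : m.support ⊆ Finset.range t) :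
    ∑ s ∈ Finset.range t, m s = m.sum fun _ e => e :=
  (Finsupp.sum_of_support_subset m h (fun _ e => e) (fun _ _ => rfl)).symm

end SwapLemmas

section InvolLemmas
variable (mu : Partition') (l : Fin k → (ℕ →₀ ℕ))

lemma G_swapl_le_t0 (hc : Cross mu l) (a : Fin k) {t : ℕ} (ht : t ≤ t0 mu l hc) :
    G mu (swapl mu l hc) a t = G mu l a t := by rw [G_swapl, if_pos ht]

lemma G_swapl_gt_t0 (hc : Cross mu l) (a : Fin k) {t : ℕ} (ht : t0 mu l hc < t) :
    G mu (swapl mu l hc) a t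
      = G mu l (Equiv.swap (j1 mu l hc) (j2 mu l hc) a) t := by
  rw [G_swapl, if_neg (by omega)]

lemma iv_swapl_j1 (hc : Cross mu l) :
    Iv mu (swapl mu l hc) (j1 mu l hc) (t0 mu l hc) (x0 mu l hc) := by
  constructor
  · rw [G_swapl_le_t0 mu l hc _ le_rfl]; exact (hx1 mu l hc).1
  · rw [G_swapl_gt_t0 mu l hc _ (by omega), Equiv.swap_apply_left]
    exact (hx2 mu l hc).2

lemma iv_swapl_j2 (hc : Cross mu l) :
    Iv mu (swapl mu l hc) (j2 mu l hc) (t0 mu l hc) (x0 mu l hc) := by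
  constructor
  · rw [G_swapl_le_t0 mu l hc _ le_rfl]; exact (hx2 mu l hc).1
  · rw [G_swapl_gt_t0 mu l hc _ (by omega), Equiv.swap_apply_right]
    exact (hx1 mu l hc).2

lemma cross_swapl (hc : Cross mu l) : Cross mu (swapl mu l hc) :=
  ⟨t0 mu l hc, x0 mu l hc, j1 mu l hc, j2 mu l hc, (j2_ne_j1 mu l hc).symm,
    iv_swapl_j1 mu l hc, iv_swapl_j2 mu l hc⟩

lemma t0_swapl (hc : Cross mu l) (hc' : Cross mu (swapl mu l hc)) :
    t0 mu (swapl mu l hc) hc' = t0 mu l hc := by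
  refine (Nat.find_eq_iff (show ∃ n, CrossAt mu (swapl mu l hc) n from hc')).2 ?_
  constructor
  · exact ⟨x0 mu l hc, j1 mu l hc, j2 mu l hc, (j2_ne_j1 mu l hc).symm,
      iv_swapl_j1 mu l hc, iv_swapl_j2 mu l hc⟩
  · intro t ht ⟨x, a, b, hab, ha, hb⟩
    refine not_crossAt_lt mu l hc ht ⟨x, a, b, hab, ?_, ?_⟩
    · exact ⟨by rw [← G_swapl_le_t0 mu l hc a (by omega : t ≤ t0 mu l hc)]; exact ha.1,
        by rw [← G_swapl_le_t0 mu l hc a (by omega : t + 1 ≤ t0 mu l hc)]; exact ha.2⟩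
    · exact ⟨by rw [← G_swapl_le_t0 mu l hc b (by omega : t ≤ t0 mu l hc)]; exact hb.1,
        by rw [← G_swapl_le_t0 mu l hc b (by omega : t + 1 ≤ t0 mu l hc)]; exact hb.2⟩

lemma iv_swapl_transfer (hc : Cross mu l) (c : Fin k) (x : ℤ)
    (h : Iv mu (swapl mu l hc) c (t0 mu l hc) x) :
    Iv mu l c (t0 mu l hc) x ∨
      (c = j1 mu l hc ∨ c = j2 mu l hc) ∧
        Iv mu l (Equiv.swap (j1 mu l hc) (j2 mu l hc) c) (t0 mu l hc) x := by
  obtain ⟨h1, h2⟩ := h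
  rw [G_swapl_le_t0 mu l hc _ le_rfl] at h1
  rw [G_swapl_gt_t0 mu l hc _ (by omega)] at h2
  rcases eq_or_ne c (j1 mu l hc) with rfl | hc1
  · rw [Equiv.swap_apply_left] at h2
    rcases le_or_gt x (G mu l (j1 mu l hc) (t0 mu l hc + 1)) with h3 | h3
    · exact Or.inl ⟨h1, h3⟩
    · refine Or.inr ⟨Or.inl rfl, ?_, ?_⟩
      · rw [Equiv.swap_apply_left]
        exact le_trans ((hx2 mu l hc).1.trans (hx1 mu l hc).2) h3.le
      · rwa [Equiv.swap_apply_left]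
  rcases eq_or_ne c (j2 mu l hc) with rfl | hc2
  · rw [Equiv.swap_apply_right] at h2
    rcases le_or_gt x (G mu l (j2 mu l hc) (t0 mu l hc + 1)) with h3 | h3
    · exact Or.inl ⟨h1, h3⟩
    · refine Or.inr ⟨Or.inr rfl, ?_, ?_⟩
      · rw [Equiv.swap_apply_right]
        exact le_trans ((hx1 mu l hc).1.trans (hx2 mu l hc).2) h3.le
      · rwa [Equiv.swap_apply_right]
  · rw [Equiv.swap_apply_of_ne_of_ne hc1 hc2] at h2
    exact Or.inl ⟨h1, h2⟩

lemma sharedX_swapl_transfer (hc : Cross mu l) (x : ℤ)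
    (h : SharedX mu (swapl mu l hc) (t0 mu l hc) x) :
    SharedX mu l (t0 mu l hc) x := by
  obtain ⟨a, b, hab, ha, hb⟩ := h
  by_cases hmem : (a = j1 mu l hc ∨ a = j2 mu l hc) ∧ (b = j1 mu l hc ∨ b = j2 mu l hc)
  · -- {a,b} = {j1,j2}; extract the four G inequalities directly
    have hj1 : Iv mu (swapl mu l hc) (j1 mu l hc) (t0 mu l hc) x := by
      rcases hmem.1 with rfl | h'
      · exact ha
      · rcases hmem.2 with rfl | h'' 
        · exact hb
        · rw [h', h''] at hab; exact absurd rfl hab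
    have hj2 : Iv mu (swapl mu l hc) (j2 mu l hc) (t0 mu l hc) x := by
      rcases hmem.2 with h'' | rfl
      · rcases hmem.1 with h' | rfl
        · rw [h', h''] at hab; exact absurd rfl hab
        · exact ha
      · exact hb
    obtain ⟨p1, p2⟩ := hj1
    obtain ⟨q1, q2⟩ := hj2
    rw [G_swapl_le_t0 mu l hc _ le_rfl] at p1 q1
    rw [G_swapl_gt_t0 mu l hc _ (by omega), Equiv.swap_apply_left] at p2
    rw [G_swapl_gt_t0 mu l hc _ (by omega), Equiv.swap_apply_right] at q2
    exact ⟨j1 mu l hc, j2 mu l hc, (j2_ne_j1 mu l hc).symm, ⟨p1, q2⟩, ⟨q1, p2⟩⟩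
  · rcases iv_swapl_transfer mu l hc a x ha with ha' | ⟨hamem, ha'⟩ <;>
      rcases iv_swapl_transfer mu l hc b x hb with hb' | ⟨hbmem, hb'⟩
    · exact ⟨a, b, hab, ha', hb'⟩
    · refine ⟨a, _, ?_, ha', hb'⟩
      intro heq
      have haj : ¬(a = j1 mu l hc ∨ a = j2 mu l hc) := fun h' => hmem ⟨h', hbmem⟩
      rcases hbmem with rfl | rfl
      · rw [Equiv.swap_apply_left] at heq; exact haj (Or.inr heq)
      · rw [Equiv.swap_apply_right] at heq; exact haj (Or.inl heq)
    · refine ⟨_, b, ?_, ha', hb'⟩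
      intro heq
      have hbj : ¬(b = j1 mu l hc ∨ b = j2 mu l hc) := fun h' => hmem ⟨hamem, h'⟩
      rcases hamem with rfl | rfl
      · rw [Equiv.swap_apply_left] at heq; exact hbj (Or.inr heq.symm)
      · rw [Equiv.swap_apply_right] at heq; exact hbj (Or.inl heq.symm)
    · refine ⟨_, _, ?_, ha', hb'⟩
      rcases hamem with rfl | rfl <;> rcases hbmem with rfl | rfl
      · exact absurd rfl hab
      · rw [Equiv.swap_apply_left, Equiv.swap_apply_right]
        exact (j2_ne_j1 mu l hc)
      · rw [Equiv.swap_apply_left, Equiv.swap_apply_right]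
        exact (j2_ne_j1 mu l hc).symm
      · exact absurd rfl hab
end InvolLemmas

lemma min'_congr {α : Type*} [LinearOrder α] {s t : Finset α} (e : s = t)
    (hs : s.Nonempty) (ht : t.Nonempty) : s.min' hs = t.min' ht := by subst e; rfl

section Invol2
variable (mu : Partition') (l : Fin k → (ℕ →₀ ℕ))

lemma lo_swapl (hc : Cross mu l) (hc' : Cross mu (swapl mu l hc)) :
    lo mu (swapl mu l hc) hc' = lo mu l hc := by
  rw [lo, lo, t0_swapl mu l hc hc']
  exact Finset.inf'_congr _ rfl (fun a _ => G_swapl_le_t0 mu l hc a le_rfl)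

lemma x0_swapl (hc : Cross mu l) (hc' : Cross mu (swapl mu l hc)) :
    x0 mu (swapl mu l hc) hc' = x0 mu l hc := by
  have ht := t0_swapl mu l hc hc'
  refine le_antisymm ?_ ?_
  · refine x0_min mu (swapl mu l hc) hc' ?_
    rw [ht]
    exact ⟨j1 mu l hc, j2 mu l hc, (j2_ne_j1 mu l hc).symm,
      iv_swapl_j1 mu l hc, iv_swapl_j2 mu l hc⟩
  · refine x0_min mu l hc ?_
    have hs := sharedX_x0 mu (swapl mu l hc) hc'
    rw [ht] at hs
    exact sharedX_swapl_transfer mu l hc _ hs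

lemma S0_swapl (hc : Cross mu l) (hc' : Cross mu (swapl mu l hc)) :
    S0 mu (swapl mu l hc) hc' = S0 mu l hc := by
  ext a
  rw [mem_S0_iff, mem_S0_iff, t0_swapl mu l hc hc', x0_swapl mu l hc hc',
    G_swapl_le_t0 mu l hc a le_rfl, G_swapl_gt_t0 mu l hc a (by omega)]
  rcases eq_or_ne a (j1 mu l hc) with rfl | h1
  · rw [Equiv.swap_apply_left]
    exact ⟨fun h => ⟨h.1, (hx1 mu l hc).2⟩, fun h => ⟨h.1, (hx2 mu l hc).2⟩⟩
  rcases eq_or_ne a (j2 mu l hc) with rfl | h2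
  · rw [Equiv.swap_apply_right]
    exact ⟨fun h => ⟨h.1, (hx2 mu l hc).2⟩, fun h => ⟨h.1, (hx1 mu l hc).2⟩⟩
  · rw [Equiv.swap_apply_of_ne_of_ne h1 h2]

lemma j1_swapl (hc : Cross mu l) (hc' : Cross mu (swapl mu l hc)) :
    j1 mu (swapl mu l hc) hc' = j1 mu l hc :=
  min'_congr (S0_swapl mu l hc hc') _ _

lemma j2_swapl (hc : Cross mu l) (hc' : Cross mu (swapl mu l hc)) :
    j2 mu (swapl mu l hc) hc' = j2 mu l hc := by
  rw [j2, j2]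
  exact min'_congr (by rw [S0_swapl mu l hc hc', j1_swapl mu l hc hc']) _ _

lemma swapl_swapl (hc : Cross mu l) (hc' : Cross mu (swapl mu l hc)) :
    swapl mu (swapl mu l hc) hc' = l := by
  have ht := t0_swapl mu l hc hc'
  have hj1 := j1_swapl mu l hc hc'
  have hj2 := j2_swapl mu l hc hc'
  have hg1 := G_succ (mu := mu) l (j1 mu l hc) (t0 mu l hc)
  have hg2 := G_succ (mu := mu) l (j2 mu l hc) (t0 mu l hc)
  funext a
  rcases eq_or_ne a (j1 mu l hc) with rfl | h1
  · conv_lhs => rw [← hj1]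
    rw [swapl_apply_j1 mu (swapl mu l hc) hc', hj1, hj2]
    ext s
    rw [nswap_apply, ht]
    rcases lt_trichotomy s (t0 mu l hc) with h | h | h
    · rw [if_pos h, swapl_apply_j1 mu l hc, nswap_apply, if_pos h]
    · rw [if_neg (by omega), if_pos h, G_swapl_gt_t0 mu l hc _ (by omega),
        Equiv.swap_apply_right, h, G_swapl_le_t0 mu l hc _ le_rfl]
      omega
    · rw [if_neg (by omega), if_neg (by omega), swapl_apply_j2 mu l hc,
        nswap_apply, if_neg (by omega), if_neg (by omega)]
  rcases eq_or_ne a (j2 mu l hc) with rfl | h2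
  · conv_lhs => rw [← hj2]
    rw [swapl_apply_j2 mu (swapl mu l hc) hc', hj1, hj2]
    ext s
    rw [nswap_apply, ht]
    rcases lt_trichotomy s (t0 mu l hc) with h | h | h
    · rw [if_pos h, swapl_apply_j2 mu l hc, nswap_apply, if_pos h]
    · rw [if_neg (by omega), if_pos h, G_swapl_gt_t0 mu l hc _ (by omega),
        Equiv.swap_apply_left, h, G_swapl_le_t0 mu l hc _ le_rfl]
      omega
    · rw [if_neg (by omega), if_neg (by omega), swapl_apply_j1 mu l hc,
        nswap_apply, if_neg (by omega), if_neg (by omega)]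
  · rw [swapl_apply_ne mu (swapl mu l hc) hc' a (by rw [hj1]; exact h1)
      (by rw [hj2]; exact h2), swapl_apply_ne mu l hc a h1 h2]
end Invol2

section DegCross
variable (lam mu : Partition') (l : Fin k → (ℕ →₀ ℕ))

lemma bigT (hc : Cross mu l) : ∃ t : ℕ, t0 mu l hc < t ∧ ∀ a : Fin k,
    (swapl mu l hc a).support ⊆ Finset.range t ∧ (l a).support ⊆ Finset.range t := by
  refine ⟨(Finset.univ.sup fun a : Fin k =>
      ((swapl mu l hc a).support.sup id) ⊔ ((l a).support.sup id)) + t0 mu l hc + 1,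
    by omega, fun a => ⟨?_, ?_⟩⟩
  · intro s hs
    simp only [Finset.mem_range]
    have h1 : s ≤ (swapl mu l hc a).support.sup id := Finset.le_sup (f := id) hs
    have h2 : (swapl mu l hc a).support.sup id
        ≤ ((swapl mu l hc a).support.sup id) ⊔ ((l a).support.sup id) := le_sup_left
    have h3 : ((swapl mu l hc a).support.sup id) ⊔ ((l a).support.sup id)
        ≤ Finset.univ.sup fun a : Fin k =>
          ((swapl mu l hc a).support.sup id) ⊔ ((l a).support.sup id) :=
      Finset.le_sup (f := fun a : Fin k =>
        ((swapl mu l hc a).support.sup id) ⊔ ((l a).support.sup id)) (Finset.mem_univ a)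
    have h4 := h1.trans (h2.trans h3)
    omega
  · intro s hs
    simp only [Finset.mem_range]
    have h1 : s ≤ (l a).support.sup id := Finset.le_sup (f := id) hs
    have h2 : (l a).support.sup id
        ≤ ((swapl mu l hc a).support.sup id) ⊔ ((l a).support.sup id) := le_sup_right
    have h3 : ((swapl mu l hc a).support.sup id) ⊔ ((l a).support.sup id)
        ≤ Finset.univ.sup fun a : Fin k =>
          ((swapl mu l hc a).support.sup id) ⊔ ((l a).support.sup id) :=
      Finset.le_sup (f := fun a : Fin k =>
        ((swapl mu l hc a).support.sup id) ⊔ ((l a).support.sup id)) (Finset.mem_univ a)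
    have h4 := h1.trans (h2.trans h3)
    omega

lemma deg_eq_G (j : Fin k) (t : ℕ) (h : (l j).support ⊆ Finset.range t) :
    (((l j).sum fun _ e => e : ℕ) : ℤ) = G mu l j t - uu mu k j := by
  rw [← sum_range_eq_deg _ t h]
  simp [G]

lemma degOK_swapl (σ : Equiv.Perm (Fin k)) (hdeg : degOK k lam mu σ l) (hc : Cross mu l) :
    degOK k lam mu (σ * Equiv.swap (j1 mu l hc) (j2 mu l hc)) (swapl mu l hc) := by
  intro j
  obtain ⟨t, ht0, hsup⟩ := bigT mu l hc
  rw [deg_eq_G mu (swapl mu l hc) j t (hsup j).1, G_swapl_gt_t0 mu l hc j ht0]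
  have h1 := hdeg (Equiv.swap (j1 mu l hc) (j2 mu l hc) j)
  rw [deg_eq_G mu l _ t (hsup _).2] at h1
  rw [Equiv.Perm.mul_apply]
  omega

lemma swapl_total (hc : Cross mu l) :
    ∑ a : Fin k, swapl mu l hc a = ∑ a : Fin k, l a := by
  ext s
  rw [Finsupp.finset_sum_apply, Finsupp.finset_sum_apply]
  exact swapl_pointwise_sum mu l hc s

end DegCross

section Cancel
variable (lam mu : Partition')

lemma uu_strictAnti {j j' : Fin k} (h : j < j') : uu mu k j' < uu mu k j := by
  have := mu.antitone (show j.1 + 1 ≤ j'.1 + 1 by omega)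
  simp only [uu]
  have : (mu.part (j'.1+1) : ℤ) ≤ (mu.part (j.1+1) : ℤ) := by exact_mod_cast this
  have hj : (j.1 : ℤ) < (j'.1 : ℤ) := by exact_mod_cast h
  omega

lemma vv_strictAnti {j j' : Fin k} (h : j < j') : vv lam k j' < vv lam k j := by
  have := lam.antitone (show j.1 + 1 ≤ j'.1 + 1 by omega)
  simp only [vv]
  have : (lam.part (j'.1+1) : ℤ) ≤ (lam.part (j.1+1) : ℤ) := by exact_mod_cast this
  have hj : (j.1 : ℤ) < (j'.1 : ℤ) := by exact_mod_cast h
  omega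

lemma cross_of_inversion (l : Fin k → (ℕ →₀ ℕ)) (σ : Equiv.Perm (Fin k))
    (hdeg : degOK k lam mu σ l) {j j' : Fin k} (hjj : j < j') (hσ : σ j' < σ j) :
    Cross mu l := by
  obtain ⟨t, ht1, hsup⟩ : ∃ t : ℕ, 1 ≤ t ∧ ∀ a : Fin k, (l a).support ⊆ Finset.range t := by
    refine ⟨(Finset.univ.sup fun a : Fin k => (l a).support.sup id) + 1, by omega, fun a s hs => ?_⟩
    simp only [Finset.mem_range]
    have h1 : s ≤ (l a).support.sup id := Finset.le_sup (f := id) hs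
    have h3 : (l a).support.sup id ≤ Finset.univ.sup fun a : Fin k => (l a).support.sup id :=
      Finset.le_sup (f := fun a : Fin k => (l a).support.sup id) (Finset.mem_univ a)
    have h4 := h1.trans h3
    omega
  have hGj : G mu l j t = vv lam k (σ j) := by
    have := hdeg j
    rw [deg_eq_G mu l j t (hsup j)] at this
    omega
  have hGj' : G mu l j' t = vv lam k (σ j') := by
    have := hdeg j'
    rw [deg_eq_G mu l j' t (hsup j')] at this
    omega
  have hfin : G mu l j t < G mu l j' t := by
    rw [hGj, hGj']
    exact vv_strictAnti lam hσ
  have hex : ∃ n : ℕ, G mu l j (n+1) < G mu l j' (n+1) := ⟨t - 1, by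
    have : t - 1 + 1 = t := by omega
    rw [this]; exact hfin⟩
  classical
  set tm := Nat.find hex with htm
  have hP : G mu l j (tm+1) < G mu l j' (tm+1) := Nat.find_spec hex
  have hprev : G mu l j' tm ≤ G mu l j tm := by
    rcases Nat.eq_zero_or_pos tm with h0 | h0
    · rw [h0]
      show G mu l j' 0 ≤ G mu l j 0
      simp only [G, Finset.range_zero, Finset.sum_empty, add_zero]
      exact (uu_strictAnti mu hjj).le
    · have := Nat.find_min hex (show tm - 1 < tm by omega)
      have he : tm - 1 + 1 = tm := by omega
      rw [he] at this
      omega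
  refine ⟨tm, G mu l j tm, j, j', hjj.ne, ⟨le_rfl, G_mono l j (by omega)⟩, ?_⟩
  exact ⟨hprev, le_trans (G_mono l j (by omega)) hP.le⟩

lemma sigma_eq_one (l : Fin k → (ℕ →₀ ℕ)) (σ : Equiv.Perm (Fin k))
    (hdeg : degOK k lam mu σ l) (hnc : ¬ Cross mu l) : σ = 1 := by
  have hmono : StrictMono ⇑σ := by
    intro a b hab
    rcases lt_trichotomy (σ a) (σ b) with h | h | h
    · exact h
    · exact absurd (σ.injective h) hab.ne
    · exact absurd (cross_of_inversion lam mu l σ hdeg hab h) hnc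
  have : ⇑σ = ⇑(1 : Equiv.Perm (Fin k)) := by
    refine (hmono.range_inj (fun a b hab => hab)).1 ?_
    rw [Equiv.range_eq_univ]; exact Set.range_id.symm
  exact Equiv.coe_fn_injective this

theorem crossing_sum_zero (μ0 : ℕ →₀ ℕ) :
    ∑ p ∈ ((Finset.univ ×ˢ (Finset.univ : Finset (Fin k)).finsuppAntidiag μ0).filter
      (fun p : Equiv.Perm (Fin k) × (Fin k →₀ (ℕ →₀ ℕ)) =>
        degOK k lam mu p.1 ⇑p.2 ∧ Cross mu ⇑p.2)),
      ((Equiv.Perm.sign p.1 : ℤ)) = 0 := by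
  refine Finset.sum_involution
    (fun p hp =>
      (p.1 * Equiv.swap (j1 mu ⇑p.2 ((Finset.mem_filter.1 hp).2.2))
          (j2 mu ⇑p.2 ((Finset.mem_filter.1 hp).2.2)),
        Finsupp.equivFunOnFinite.symm (swapl mu ⇑p.2 ((Finset.mem_filter.1 hp).2.2))))
    (fun p hp => ?_) (fun p hp _ => ?_) (fun p hp => ?_) (fun p hp => ?_)
  · -- signs cancel
    have hne : j1 mu ⇑p.2 ((Finset.mem_filter.1 hp).2.2)
        ≠ j2 mu ⇑p.2 ((Finset.mem_filter.1 hp).2.2) := (j2_ne_j1 mu _ _).symm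
    rw [Equiv.Perm.sign_mul, Equiv.Perm.sign_swap hne]
    push_cast
    ring
  · -- not a fixed point
    intro heq
    have h1 := congrArg Prod.fst heq
    simp only at h1
    have h2 := congrArg (fun τ : Equiv.Perm (Fin k) =>
      τ (j1 mu ⇑p.2 ((Finset.mem_filter.1 hp).2.2))) h1
    simp only [Equiv.Perm.mul_apply, Equiv.swap_apply_left] at h2
    exact (j2_ne_j1 mu ⇑p.2 ((Finset.mem_filter.1 hp).2.2)) (p.1.injective h2)
  · -- membership
    obtain ⟨hmem, hdeg, hcross⟩ := Finset.mem_filter.1 hp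
    rw [Finset.mem_product] at hmem
    rw [Finset.mem_finsuppAntidiag] at hmem
    refine Finset.mem_filter.2 ⟨Finset.mem_product.2 ⟨Finset.mem_univ _, ?_⟩, ?_, ?_⟩
    · rw [Finset.mem_finsuppAntidiag]
      refine ⟨?_, by simp⟩
      have : ∀ a : Fin k, (Finsupp.equivFunOnFinite.symm (swapl mu ⇑p.2 hcross)) a
          = swapl mu ⇑p.2 hcross a := fun a => rfl
      rw [show (Finset.univ.sum (Finsupp.equivFunOnFinite.symm (swapl mu ⇑p.2 hcross)))
          = ∑ a : Fin k, swapl mu ⇑p.2 hcross a from Finset.sum_congr rfl (fun a _ => this a)]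
      rw [swapl_total mu ⇑p.2 hcross]
      exact hmem.2.1
    · exact degOK_swapl lam mu ⇑p.2 p.1 hdeg hcross
    · exact cross_swapl mu ⇑p.2 hcross
  · -- involution
    have hcross := (Finset.mem_filter.1 hp).2.2
    set l := ⇑p.2 with hl
    have hc2 : Cross mu (swapl mu l hcross) := cross_swapl mu l hcross
    refine Prod.ext ?_ ?_
    · change p.1 * Equiv.swap (j1 mu l hcross) (j2 mu l hcross)
          * Equiv.swap (j1 mu (swapl mu l hcross) hc2) (j2 mu (swapl mu l hcross) hc2) = p.1
      rw [j1_swapl mu l hcross hc2, j2_swapl mu l hcross hc2, mul_assoc,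
        Equiv.swap_mul_self, mul_one]
    · change Finsupp.equivFunOnFinite.symm (swapl mu (swapl mu l hcross) hc2) = p.2
      rw [swapl_swapl mu l hcross hc2]
      exact Finsupp.equivFunOnFinite.symm_apply_apply p.2
end Cancel

section Assemble
variable (lam mu : Partition')

theorem det_side (μ0 : ℕ →₀ ℕ) :
    ∑ σ : Equiv.Perm (Fin k), (Equiv.Perm.sign σ : ℤ) *
      (((Finset.univ : Finset (Fin k)).finsuppAntidiag μ0).filter
        (fun L : Fin k →₀ (ℕ →₀ ℕ) => degOK k lam mu σ ⇑L)).card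
    = ((((Finset.univ : Finset (Fin k)).finsuppAntidiag μ0).filter
        (fun L : Fin k →₀ (ℕ →₀ ℕ) => degOK k lam mu 1 ⇑L ∧ ¬ Cross mu ⇑L)).card : ℤ) := by
  classical
  have step1 : ∑ σ : Equiv.Perm (Fin k), (Equiv.Perm.sign σ : ℤ) *
      (((Finset.univ : Finset (Fin k)).finsuppAntidiag μ0).filter
        (fun L : Fin k →₀ (ℕ →₀ ℕ) => degOK k lam mu σ ⇑L)).card
      = ∑ p ∈ ((Finset.univ ×ˢ (Finset.univ : Finset (Fin k)).finsuppAntidiag μ0).filter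
          (fun p : Equiv.Perm (Fin k) × (Fin k →₀ (ℕ →₀ ℕ)) => degOK k lam mu p.1 ⇑p.2)),
          ((Equiv.Perm.sign p.1 : ℤ)) := by
    rw [Finset.sum_filter, Finset.sum_product]
    refine Finset.sum_congr rfl fun σ _ => ?_
    simp only
    rw [← Finset.sum_filter, Finset.sum_const, nsmul_eq_mul, mul_comm]
  rw [step1, ← Finset.sum_filter_add_sum_filter_not _
    (fun p : Equiv.Perm (Fin k) × (Fin k →₀ (ℕ →₀ ℕ)) => Cross mu ⇑p.2),
    Finset.filter_filter, Finset.filter_filter]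
  have hzero : ∑ p ∈ ((Finset.univ ×ˢ (Finset.univ : Finset (Fin k)).finsuppAntidiag μ0).filter
      (fun p : Equiv.Perm (Fin k) × (Fin k →₀ (ℕ →₀ ℕ)) =>
        degOK k lam mu p.1 ⇑p.2 ∧ Cross mu ⇑p.2)),
      ((Equiv.Perm.sign p.1 : ℤ)) = 0 := crossing_sum_zero lam mu μ0
  rw [hzero, zero_add]
  have hone : ∀ p ∈ ((Finset.univ ×ˢ (Finset.univ : Finset (Fin k)).finsuppAntidiag μ0).filter
      (fun p : Equiv.Perm (Fin k) × (Fin k →₀ (ℕ →₀ ℕ)) =>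
        degOK k lam mu p.1 ⇑p.2 ∧ ¬ Cross mu ⇑p.2)),
      ((Equiv.Perm.sign p.1 : ℤ)) = 1 := by
    intro p hp
    obtain ⟨-, hdeg, hnc⟩ := Finset.mem_filter.1 hp
    rw [sigma_eq_one lam mu ⇑p.2 p.1 hdeg hnc]
    simp
  rw [Finset.sum_congr rfl hone, Finset.sum_const, nsmul_eq_mul, mul_one]
  congr 1
  refine Finset.card_bij' (fun p _ => p.2) (fun L _ => (1, L)) ?_ ?_ ?_ ?_
  · intro p hp
    obtain ⟨hmem, hdeg, hnc⟩ := Finset.mem_filter.1 hp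
    have h1 : p.1 = 1 := sigma_eq_one lam mu ⇑p.2 p.1 hdeg hnc
    refine Finset.mem_filter.2 ⟨(Finset.mem_product.1 hmem).2, ?_, hnc⟩
    rwa [h1] at hdeg
  · intro L hL
    obtain ⟨hmem, hdeg, hnc⟩ := Finset.mem_filter.1 hL
    exact Finset.mem_filter.2 ⟨Finset.mem_product.2 ⟨Finset.mem_univ _, hmem⟩, hdeg, hnc⟩
  · intro p hp
    obtain ⟨-, hdeg, hnc⟩ := Finset.mem_filter.1 hp
    exact Prod.ext (sigma_eq_one lam mu ⇑p.2 p.1 hdeg hnc).symm rfl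
  · intro L hL
    rfl
end Assemble

section Tableaux
variable {k : ℕ} (lam mu : Partition')

def rowF (j : Fin k) : Finset ℤ :=
  Finset.Icc ((mu.part (j.1+1) : ℤ) + 1) ((lam.part (j.1+1) : ℤ))

def DFinK (lam mu : Partition') (k : ℕ) : Finset Box :=
  Finset.univ.biUnion (fun j : Fin k =>
    (rowF lam mu j).image (fun c => (((j.1 : ℤ) + 1), c)))

lemma coe_DFin (hlk : ∀ i : ℕ, k < i → lam.part i = 0) :
    (↑(DFinK lam mu k) : Set Box) = skewCells lam mu := by
  ext b
  simp only [DFinK, Finset.coe_biUnion, Set.mem_iUnion, Finset.mem_coe,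
    Finset.mem_image, Finset.coe_univ, Set.mem_univ, Set.iUnion_true,
    rowF, Finset.mem_Icc, skewCells, Set.mem_setOf_eq]
  constructor
  · rintro ⟨j, c, ⟨hc1, hc2⟩, rfl⟩
    refine ⟨by push_cast; omega, ?_, ?_⟩
    · have : ((j.1 : ℤ) + 1).toNat = j.1 + 1 := by omega
      rw [this]; omega
    · have : ((j.1 : ℤ) + 1).toNat = j.1 + 1 := by omega
      rw [this]; omega
  · rintro ⟨hb1, hb2, hb3⟩
    have hr : 1 ≤ b.1.toNat := by omega
    have hrk : b.1.toNat ≤ k := by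
      by_contra h
      push_neg at h
      rw [hlk _ h] at hb3
      have : (0:ℤ) ≤ (mu.part b.1.toNat : ℤ) := by positivity
      omega
    refine ⟨⟨b.1.toNat - 1, by omega⟩, b.2, ⟨?_, ?_⟩, ?_⟩
    · have : (b.1.toNat : ℤ) - 1 + 1 = b.1 := by omega
      simp only []
      have he : (b.1.toNat - 1) + 1 = b.1.toNat := by omega
      rw [he]; omega
    · have he : (b.1.toNat - 1) + 1 = b.1.toNat := by omega
      simp only []
      rw [he]; omega
    · have : ((b.1.toNat - 1 : ℕ) : ℤ) + 1 = b.1 := by omega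
      rw [this]

lemma mono_thresh {a b : ℤ} {f : ℤ → ℕ}
    (hf : ∀ c c' : ℤ, a ≤ c → c ≤ c' → c' ≤ b → f c ≤ f c') (t : ℕ) {c : ℤ}
    (hc1 : a ≤ c) (hc2 : c ≤ b) :
    (f c ≤ t ↔ c < a + ((Finset.Icc a b).filter (fun x => f x ≤ t)).card) := by
  classical
  set S := (Finset.Icc a b).filter (fun x => f x ≤ t) with hS
  constructor
  · intro h
    have hsub : Finset.Icc a c ⊆ S := by
      intro x hx
      rw [Finset.mem_Icc] at hx
      exact Finset.mem_filter.2 ⟨Finset.mem_Icc.2 ⟨hx.1, hx.2.trans hc2⟩,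
        le_trans (hf x c hx.1 hx.2 hc2) h⟩
    have := Finset.card_le_card hsub
    rw [Int.card_Icc] at this
    omega
  · intro h
    by_contra hft
    push_neg at hft
    have hsub : S ⊆ Finset.Icc a (c - 1) := by
      intro x hx
      obtain ⟨hx1, hx2⟩ := Finset.mem_filter.1 hx
      rw [Finset.mem_Icc] at hx1 ⊢
      refine ⟨hx1.1, ?_⟩
      by_contra hxc
      push_neg at hxc
      exact absurd (le_trans (hf c x hc1 (by omega) hx1.2) hx2) (by omega)
    have := Finset.card_le_card hsub
    rw [Int.card_Icc] at this
    omega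
end Tableaux

section Tab2
variable {k : ℕ} (lam mu : Partition')

lemma box_mem_iff (j : Fin k) (c : ℤ) :
    ((((j.1 : ℤ) + 1), c) ∈ skewCells lam mu) ↔ c ∈ rowF lam mu j := by
  have ht : ((j.1 : ℤ) + 1).toNat = j.1 + 1 := by omega
  simp only [skewCells, Set.mem_setOf_eq, rowF, Finset.mem_Icc, ht]
  constructor
  · rintro ⟨-, h2, h3⟩; omega
  · rintro ⟨h1, h2⟩; refine ⟨by omega, by omega, by omega⟩

def cnt (T : Box → ℕ) (j : Fin k) (n : ℕ) : ℕ :=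
  ((rowF lam mu j).filter (fun c => T (((j.1 : ℤ) + 1), c) = n)).card

def toLrow (T : Box → ℕ) (j : Fin k) : ℕ →₀ ℕ :=
  Finsupp.onFinset ((rowF lam mu j).image (fun c => T (((j.1 : ℤ) + 1), c)))
    (fun n => cnt lam mu T j n)
    (by
      intro n hn
      simp only [cnt] at hn
      obtain ⟨c, hc⟩ := Finset.card_pos.1 (Nat.pos_of_ne_zero hn)
      obtain ⟨hc1, hc2⟩ := Finset.mem_filter.1 hc
      exact Finset.mem_image.2 ⟨c, hc1, hc2⟩)

lemma ncard_level (hlk : ∀ i : ℕ, k < i → lam.part i = 0) (T : Box → ℕ) (n : ℕ) :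
    {b ∈ skewCells lam mu | T b = n}.ncard = ∑ j : Fin k, cnt lam mu T j n := by
  classical
  have h1 : {b ∈ skewCells lam mu | T b = n}
      = ↑((DFinK lam mu k).filter (fun b => T b = n)) := by
    ext b
    rw [← coe_DFin lam mu hlk]
    simp
  rw [h1, Set.ncard_coe_finset, DFinK, Finset.filter_biUnion]
  rw [Finset.card_biUnion]
  · refine Finset.sum_congr rfl fun j _ => ?_
    rw [Finset.filter_image]
    rw [Finset.card_image_of_injective _ (fun c c' h => by simpa using h)]
    rfl
  · intro x _ y _ hxy
    rw [Function.onFun, Finset.disjoint_left]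
    intro b hb hb'
    have h1 := Finset.mem_filter.1 hb
    have h2 := Finset.mem_filter.1 hb'
    obtain ⟨c, -, rfl⟩ := Finset.mem_image.1 h1.1
    obtain ⟨c', -, he⟩ := Finset.mem_image.1 h2.1
    apply hxy
    have : (x.1 : ℤ) = y.1 := by
      have := congrArg Prod.fst he
      simpa using this.symm
    exact Fin.ext (by exact_mod_cast this)

lemma deg_toLrow (T : Box → ℕ) (j : Fin k) :
    ((toLrow lam mu T j).sum fun _ e => e) = (rowF lam mu j).card := by
  classical
  rw [Finsupp.sum_of_support_subset (toLrow lam mu T j)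
    (Finsupp.support_onFinset_subset) (fun _ e => e) (fun _ _ => rfl)]
  have : ∀ n ∈ (rowF lam mu j).image (fun c => T (((j.1 : ℤ) + 1), c)),
      (toLrow lam mu T j) n = cnt lam mu T j n := fun n _ => rfl
  rw [Finset.sum_congr rfl this]
  exact (Finset.card_eq_sum_card_fiberwise (fun c hc =>
    Finset.mem_image.2 ⟨c, hc, rfl⟩)).symm

lemma sum_cnt_le (T : Box → ℕ) (j : Fin k) (t : ℕ) :
    ∑ s ∈ Finset.range (t+1), cnt lam mu T j s
      = ((rowF lam mu j).filter (fun c => T (((j.1 : ℤ) + 1), c) ≤ t)).card := by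
  classical
  rw [Finset.card_eq_sum_card_fiberwise (f := fun c => T (((j.1 : ℤ) + 1), c))
    (t := Finset.range (t+1)) (fun c hc =>
      Finset.mem_range.2 (Nat.lt_succ_of_le (Finset.mem_filter.1 hc).2))]
  refine Finset.sum_congr rfl fun s hs => ?_
  rw [Finset.mem_range] at hs
  simp only [cnt]
  rw [Finset.filter_filter]
  congr 1
  refine Finset.filter_congr fun c _ => ?_
  constructor
  · intro h; exact ⟨by omega, h⟩
  · rintro ⟨-, h⟩; exact h

lemma G_toL (T : Box → ℕ) (j : Fin k) (t : ℕ) :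
    G mu (fun j => toLrow lam mu T j) j (t+1)
      = uu mu k j + ((rowF lam mu j).filter
          (fun c => T (((j.1 : ℤ) + 1), c) ≤ t)).card := by
  rw [G, ← sum_cnt_le lam mu T j t]
  push_cast
  refine congrArg _ ?_
  exact Finset.sum_congr rfl fun s _ => rfl

lemma row_mono (T : Box → ℕ) (hssyt : IsSSYT (skewCells lam mu) T) (j : Fin k) :
    ∀ (c c' : ℤ), (mu.part (j.1+1) : ℤ) + 1 ≤ c → c ≤ c' → c' ≤ (lam.part (j.1+1) : ℤ) →
      T (((j.1 : ℤ) + 1), c) ≤ T (((j.1 : ℤ) + 1), c') := by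
  have key : ∀ (d : ℕ) (c : ℤ), (mu.part (j.1+1) : ℤ) + 1 ≤ c →
      c + d ≤ (lam.part (j.1+1) : ℤ) →
      T (((j.1 : ℤ) + 1), c) ≤ T (((j.1 : ℤ) + 1), c + d) := by
    intro d
    induction d with
    | zero => intro c _ _; simp
    | succ d ih =>
      intro c hc1 hc2
      refine le_trans (ih c hc1 (by omega)) ?_
      have hmem : (((j.1 : ℤ) + 1), c + d) ∈ skewCells lam mu :=
        (box_mem_iff lam mu j _).2 (Finset.mem_Icc.2 ⟨by omega, by omega⟩)
      have hmem' : (((j.1 : ℤ) + 1), c + d + 1) ∈ skewCells lam mu :=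
        (box_mem_iff lam mu j _).2 (Finset.mem_Icc.2 ⟨by omega, by omega⟩)
      have := hssyt.1 _ hmem hmem'
      simp only at this
      convert this using 2
      · rfl
      push_cast
      ring
  intro c c' hc1 hcc hc2
  have : c' = c + ((c' - c).toNat : ℤ) := by omega
  rw [this]
  exact key _ c hc1 (by omega)
end Tab2

section DirA
variable {k : ℕ} (lam mu : Partition')

lemma thresh_ssyt (T : Box → ℕ) (hssyt : IsSSYT (skewCells lam mu) T) (j : Fin k)
    {c : ℤ} (hc : c ∈ rowF lam mu j) (t : ℕ) :
    T (((j.1 : ℤ) + 1), c) ≤ t ↔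
      c ≤ G mu (fun a => toLrow lam mu T a) j (t+1) + (j.1 + 1) := by
  obtain ⟨hc1, hc2⟩ := Finset.mem_Icc.1 hc
  rw [G_toL, mono_thresh (fun c c' h1 h2 h3 => row_mono lam mu T hssyt j c c' h1 h2 h3) t hc1 hc2]
  simp only [uu, rowF]
  constructor <;> intro h <;> omega

lemma card_rowF (hsub : ∀ i : ℕ, mu.part i ≤ lam.part i) (j : Fin k) :
    ((rowF lam mu j).card : ℤ) = (lam.part (j.1+1) : ℤ) - (mu.part (j.1+1) : ℤ) := by
  rw [rowF, Int.card_Icc]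
  have := hsub (j.1+1)
  omega

lemma G_toL_le_vv (hsub : ∀ i : ℕ, mu.part i ≤ lam.part i) (T : Box → ℕ) (j : Fin k) (t : ℕ) :
    G mu (fun a => toLrow lam mu T a) j (t+1) ≤ vv lam k j := by
  rw [G_toL]
  have h1 : ((rowF lam mu j).filter
      (fun c => T (((j.1 : ℤ) + 1), c) ≤ t)).card ≤ (rowF lam mu j).card :=
    Finset.card_le_card (Finset.filter_subset _ _)
  have h2 := card_rowF lam mu hsub j
  simp only [uu, vv]
  omega

lemma adj_lt (hsub : ∀ i : ℕ, mu.part i ≤ lam.part i) (T : Box → ℕ)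
    (hssyt : IsSSYT (skewCells lam mu) T) (j j' : Fin k) (hadj : j'.1 = j.1 + 1) (t : ℕ) :
    G mu (fun a => toLrow lam mu T a) j' (t+1) < G mu (fun a => toLrow lam mu T a) j t := by
  have hmu : mu.part (j'.1+1) ≤ mu.part (j.1+1) := mu.antitone (by omega)
  have hlam : lam.part (j'.1+1) ≤ lam.part (j.1+1) := lam.antitone (by omega)
  have huu : uu mu k j' < uu mu k j := uu_strictAnti mu (by rw [Fin.lt_def]; omega)
  have hGj0 : uu mu k j ≤ G mu (fun a => toLrow lam mu T a) j t := by
    have h0 : G mu (fun a => toLrow lam mu T a) j 0 = uu mu k j := by simp [G]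
    rw [← h0]
    exact G_mono _ j (Nat.zero_le t)
  have hGj' : G mu (fun a => toLrow lam mu T a) j' (t+1) = uu mu k j'
      + ((rowF lam mu j').filter (fun c => T (((j'.1 : ℤ) + 1), c) ≤ t)).card :=
    G_toL lam mu T j' t
  rcases Nat.eq_zero_or_pos
      (((rowF lam mu j').filter (fun c => T (((j'.1 : ℤ) + 1), c) ≤ t)).card) with h0 | h0
  · omega
  · have hcrow' : G mu (fun a => toLrow lam mu T a) j' (t+1) + (j'.1 + 1) ∈ rowF lam mu j' := by
      rw [rowF, Finset.mem_Icc]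
      have hle := G_toL_le_vv lam mu hsub T j' t
      simp only [uu, vv] at hGj' hle ⊢
      omega
    have hTb' : T (((j'.1 : ℤ) + 1), G mu (fun a => toLrow lam mu T a) j' (t+1) + (j'.1 + 1)) ≤ t :=
      (thresh_ssyt lam mu T hssyt j' hcrow' t).2 le_rfl
    rcases le_or_gt (G mu (fun a => toLrow lam mu T a) j' (t+1) + (j'.1 + 1))
        ((mu.part (j.1+1) : ℤ)) with hcmu | hcmu
    · simp only [uu] at hGj0 huu ⊢
      omega
    · have hcrow : G mu (fun a => toLrow lam mu T a) j' (t+1) + (j'.1 + 1) ∈ rowF lam mu j := by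
        have hcrow2 := hcrow'
        rw [rowF, Finset.mem_Icc] at hcrow2
        rw [rowF, Finset.mem_Icc]
        omega
      have hmem : (((j.1 : ℤ) + 1), G mu (fun a => toLrow lam mu T a) j' (t+1) + (j'.1 + 1))
          ∈ skewCells lam mu := (box_mem_iff lam mu j _).2 hcrow
      have hmem' : ((((j.1 : ℤ) + 1) + 1), G mu (fun a => toLrow lam mu T a) j' (t+1) + (j'.1 + 1))
          ∈ skewCells lam mu := by
        have he : ((j.1 : ℤ) + 1) + 1 = ((j'.1 : ℤ) + 1) := by omega
        rw [he]
        exact (box_mem_iff lam mu j' _).2 hcrow'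
      have hlt := hssyt.2.1 _ hmem hmem'
      simp only at hlt
      have he : ((j.1 : ℤ) + 1) + 1 = ((j'.1 : ℤ) + 1) := by omega
      rw [he] at hlt
      have ht1 : 1 ≤ t := by omega
      have hTb : T (((j.1 : ℤ) + 1), G mu (fun a => toLrow lam mu T a) j' (t+1) + (j'.1 + 1)) ≤ t - 1 := by
        omega
      have hth := (thresh_ssyt lam mu T hssyt j hcrow (t-1)).1 hTb
      have he2 : t - 1 + 1 = t := by omega
      rw [he2] at hth
      omega

lemma chain_lt (hsub : ∀ i : ℕ, mu.part i ≤ lam.part i) (T : Box → ℕ)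
    (hssyt : IsSSYT (skewCells lam mu) T) :
    ∀ (d : ℕ) (j j' : Fin k), j'.1 = j.1 + 1 + d → ∀ t : ℕ,
      G mu (fun a => toLrow lam mu T a) j' (t+1) < G mu (fun a => toLrow lam mu T a) j t := by
  intro d
  induction d with
  | zero => intro j j' hjj t; exact adj_lt lam mu hsub T hssyt j j' (by omega) t
  | succ d ih =>
    intro j j' hjj t
    have hmid : j.1 + 1 < k := by have := j'.2; omega
    set m : Fin k := ⟨j.1 + 1, hmid⟩ with hm
    have h1 : G mu (fun a => toLrow lam mu T a) j' (t+1)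
        < G mu (fun a => toLrow lam mu T a) m t := ih m j' (by simp [hm]; omega) t
    have h2 : G mu (fun a => toLrow lam mu T a) m t
        < G mu (fun a => toLrow lam mu T a) j t := by
      rcases Nat.eq_zero_or_pos t with rfl | ht
      · show G mu _ m 0 < G mu _ j 0
        simp only [G, Finset.range_zero, Finset.sum_empty, add_zero]
        exact uu_strictAnti mu (by rw [Fin.lt_def]; simp [hm])
      · have := adj_lt lam mu hsub T hssyt j m (by simp [hm]) (t-1)
        have he : t - 1 + 1 = t := by omega
        rw [he] at this
        exact lt_of_lt_of_le this (G_mono _ j (by omega))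
    exact h1.trans h2

lemma noncross_toL (hsub : ∀ i : ℕ, mu.part i ≤ lam.part i) (T : Box → ℕ)
    (hssyt : IsSSYT (skewCells lam mu) T) :
    ¬ Cross mu (fun a : Fin k => toLrow lam mu T a) := by
  rintro ⟨t, x, a, b, hab, ha, hb⟩
  rcases lt_or_gt_of_ne hab with h | h
  · have := chain_lt lam mu hsub T hssyt (b.1 - a.1 - 1) a b
      (by have := Fin.lt_def.1 h; omega) t
    have h1 := ha.1
    have h2 := hb.2
    omega
  · have := chain_lt lam mu hsub T hssyt (a.1 - b.1 - 1) b a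
      (by have := Fin.lt_def.1 h; omega) t
    have h1 := hb.1
    have h2 := ha.2
    omega

lemma degOK_toL (hsub : ∀ i : ℕ, mu.part i ≤ lam.part i) (T : Box → ℕ) :
    degOK k lam mu 1 (fun a => toLrow lam mu T a) := by
  intro j
  rw [deg_toLrow]
  have := card_rowF lam mu hsub j
  simp only [Equiv.Perm.one_apply, vv, uu]
  omega
end DirA

attribute [local instance] Classical.propDecidable

def pthr (mu : Partition') {k : ℕ} (L : Fin k → ℕ →₀ ℕ) (j : Fin k) (c : ℤ) (t : ℕ) : Prop :=
  c ≤ G mu L j (t+1) + (j.1 + 1)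

def fromL (lam mu : Partition') {k : ℕ} (L : Fin k → ℕ →₀ ℕ) : Box → ℕ := fun b =>
  if hb : b ∈ skewCells lam mu ∧ b.1.toNat - 1 < k then
    (if ht : ∃ t, pthr mu L ⟨b.1.toNat - 1, hb.2⟩ b.2 t then Nat.find ht else 0)
  else 0

section DirB
variable {k : ℕ} (lam mu : Partition')

lemma noncross_chain (L : Fin k → ℕ →₀ ℕ) (hnc : ¬ Cross mu L)
    {j j' : Fin k} (hlt : j < j') (t : ℕ) :
    G mu L j' (t+1) < G mu L j t := by
  have huu : uu mu k j' < uu mu k j := uu_strictAnti mu hlt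
  induction t with
  | zero =>
    by_contra h
    push_neg at h
    refine hnc ⟨0, G mu L j 0, j, j', hlt.ne, ⟨le_rfl, G_mono L j (by omega)⟩, ?_⟩
    refine ⟨?_, h⟩
    show G mu L j' 0 ≤ G mu L j 0
    simp only [G, Finset.range_zero, Finset.sum_empty, add_zero]
    exact huu.le
  | succ t ih =>
    by_contra h
    push_neg at h
    refine hnc ⟨t+1, G mu L j (t+1), j, j', hlt.ne,
      ⟨le_rfl, G_mono L j (by omega)⟩, ⟨?_, h⟩⟩
    exact le_trans ih.le (G_mono L j (by omega))

lemma exists_bigsupp (L : Fin k → ℕ →₀ ℕ) (t1 : ℕ) :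
    ∃ t : ℕ, t1 ≤ t ∧ ∀ a : Fin k, (L a).support ⊆ Finset.range t := by
  refine ⟨(Finset.univ.sup fun a : Fin k => (L a).support.sup id) + t1 + 1, by omega,
    fun a s hs => ?_⟩
  simp only [Finset.mem_range]
  have h1 : s ≤ (L a).support.sup id := Finset.le_sup (f := id) hs
  have h3 : (L a).support.sup id ≤ Finset.univ.sup fun a : Fin k => (L a).support.sup id :=
    Finset.le_sup (f := fun a : Fin k => (L a).support.sup id) (Finset.mem_univ a)
  have h4 := h1.trans h3
  omega

lemma G_le_vv (L : Fin k → ℕ →₀ ℕ) (hdeg : degOK k lam mu 1 L) (j : Fin k) (t : ℕ) :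
    G mu L j t ≤ vv lam k j := by
  obtain ⟨t', ht', hsup⟩ := exists_bigsupp L t
  have h1 : G mu L j t ≤ G mu L j t' := G_mono L j ht'
  have h2 := deg_eq_G mu L j t' (hsup j)
  have h3 := hdeg j
  simp only [Equiv.Perm.one_apply] at h3
  omega

lemma exists_pthr (L : Fin k → ℕ →₀ ℕ) (hdeg : degOK k lam mu 1 L) (j : Fin k)
    {c : ℤ} (hc : c ≤ (lam.part (j.1+1) : ℤ)) : ∃ t : ℕ, pthr mu L j c t := by
  obtain ⟨t', -, hsup⟩ := exists_bigsupp L 0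
  refine ⟨t', ?_⟩
  have h2 := deg_eq_G mu L j (t'+1) (fun s hs => by
    have := hsup j hs; simp only [Finset.mem_range] at this ⊢; omega)
  have h3 := hdeg j
  simp only [Equiv.Perm.one_apply] at h3
  simp only [pthr, vv] at h2 h3 ⊢
  omega

lemma fromL_spec (L : Fin k → ℕ →₀ ℕ) (hdeg : degOK k lam mu 1 L) (j : Fin k)
    {c : ℤ} (hc : c ∈ rowF lam mu j) (t : ℕ) :
    (fromL lam mu L (((j.1 : ℤ) + 1), c) ≤ t ↔ pthr mu L j c t) := by
  classical
  have hmem : (((j.1 : ℤ) + 1), c) ∈ skewCells lam mu := (box_mem_iff lam mu j _).2 hc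
  have hk : (((j.1 : ℤ) + 1) : ℤ).toNat - 1 < k := by
    have : (((j.1 : ℤ) + 1) : ℤ).toNat = j.1 + 1 := by omega
    rw [this]; omega
  have hj : (⟨(((j.1 : ℤ) + 1) : ℤ).toNat - 1, hk⟩ : Fin k) = j := by
    apply Fin.ext
    simp only []
    omega
  rw [fromL]
  rw [dif_pos ⟨hmem, hk⟩]
  rw [dif_pos (by rw [hj]; exact exists_pthr lam mu L hdeg j (Finset.mem_Icc.1 hc).2)]
  rw [Nat.find_le_iff]
  constructor
  · rintro ⟨m, hm, hpm⟩
    rw [hj] at hpm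
    simp only [pthr] at hpm ⊢
    exact le_trans hpm (by
      have := G_mono (mu := mu) L j (show m + 1 ≤ t + 1 by omega)
      omega)
  · intro hp
    refine ⟨t, le_rfl, ?_⟩
    rw [hj]
    exact hp

lemma fromL_zero (L : Fin k → ℕ →₀ ℕ) (b : Box) (hb : b ∉ skewCells lam mu) :
    fromL lam mu L b = 0 := by
  rw [fromL, dif_neg (by rintro ⟨h, -⟩; exact hb h)]
end DirB

section DirB2
variable {k : ℕ} (lam mu : Partition')

lemma mem_skew_rep (hlk : ∀ i : ℕ, k < i → lam.part i = 0) {b : Box}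
    (hb : b ∈ skewCells lam mu) :
    ∃ (j : Fin k) (c : ℤ), b = (((j.1 : ℤ) + 1), c) ∧ c ∈ rowF lam mu j := by
  rw [← coe_DFin lam mu hlk] at hb
  rw [Finset.mem_coe, DFinK, Finset.mem_biUnion] at hb
  obtain ⟨j, -, hj⟩ := hb
  obtain ⟨c, hc, he⟩ := Finset.mem_image.1 hj
  exact ⟨j, c, he.symm, hc⟩

lemma ssyt_fromL (hlk : ∀ i : ℕ, k < i → lam.part i = 0) (L : Fin k → ℕ →₀ ℕ)
    (hdeg : degOK k lam mu 1 L) (hnc : ¬ Cross mu L) :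
    IsSSYT (skewCells lam mu) (fromL lam mu L) := by
  refine ⟨?_, ?_, fun b hb => fromL_zero lam mu L b hb⟩
  · intro b hb hb'
    obtain ⟨j, c, rfl, hc⟩ := mem_skew_rep lam mu hlk hb
    have hc' : c + 1 ∈ rowF lam mu j := by
      have := mem_skew_rep lam mu hlk hb'
      obtain ⟨j', c', he, hcc⟩ := this
      have h1 : (j'.1 : ℤ) = j.1 := by
        have := congrArg Prod.fst he
        simp only at this
        omega
      have h2 : c' = c + 1 := by
        have := congrArg Prod.snd he
        simp only at this
        omega
      have : j' = j := Fin.ext (by exact_mod_cast h1)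
      rw [← this, ← h2]
      exact hcc
    rw [fromL_spec lam mu L hdeg j hc]
    have hple := (fromL_spec lam mu L hdeg j hc'
      (fromL lam mu L (((j.1 : ℤ) + 1), c + 1))).1 le_rfl
    simp only [pthr] at hple ⊢
    omega
  · intro b hb hb'
    obtain ⟨j, c, rfl, hc⟩ := mem_skew_rep lam mu hlk hb
    obtain ⟨j', c', he, hc'⟩ := mem_skew_rep lam mu hlk hb'
    have h1 : (j'.1 : ℤ) = j.1 + 1 := by
      have := congrArg Prod.fst he
      simp only at this
      omega
    have h2 : c' = c := by
      have := congrArg Prod.snd he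
      simp only at this
      omega
    rw [h2] at he hc'
    rw [he]
    have hjj : j < j' := by rw [Fin.lt_def]; omega
    have hchain := noncross_chain mu L hnc hjj (fromL lam mu L (((j'.1 : ℤ) + 1), c))
    have hple := (fromL_spec lam mu L hdeg j' hc'
      (fromL lam mu L (((j'.1 : ℤ) + 1), c))).1 le_rfl
    rcases Nat.eq_zero_or_pos (fromL lam mu L (((j'.1 : ℤ) + 1), c)) with h0 | h0
    · exfalso
      rw [h0] at hple hchain
      simp only [pthr] at hple
      have hG0 : G mu L j 0 = uu mu k j := by simp [G]
      have hcrow := Finset.mem_Icc.1 hc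
      simp only [uu] at hG0
      omega
    · have hfind : fromL lam mu L (((j.1 : ℤ) + 1), c)
          ≤ fromL lam mu L (((j'.1 : ℤ) + 1), c) - 1 := by
        rw [fromL_spec lam mu L hdeg j hc]
        simp only [pthr] at hple ⊢
        have he2 : fromL lam mu L (((j'.1 : ℤ) + 1), c) - 1 + 1
            = fromL lam mu L (((j'.1 : ℤ) + 1), c) := by omega
        rw [he2]
        omega
      omega

lemma filter_fromL_card (L : Fin k → ℕ →₀ ℕ) (hdeg : degOK k lam mu 1 L)
    (j : Fin k) (t : ℕ) :
    ((((rowF lam mu j).filter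
        (fun c => fromL lam mu L (((j.1 : ℤ) + 1), c) ≤ t)).card : ℤ))
      = G mu L j (t+1) - uu mu k j := by
  classical
  have hfil : (rowF lam mu j).filter
      (fun c => fromL lam mu L (((j.1 : ℤ) + 1), c) ≤ t)
      = Finset.Icc ((mu.part (j.1+1) : ℤ) + 1) (G mu L j (t+1) + (j.1 + 1)) := by
    ext c
    rw [Finset.mem_filter, Finset.mem_Icc]
    constructor
    · rintro ⟨hcr, hle⟩
      have := (fromL_spec lam mu L hdeg j hcr t).1 hle
      simp only [pthr] at this
      have h1 := Finset.mem_Icc.1 hcr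
      exact ⟨by omega, by omega⟩
    · rintro ⟨h1, h2⟩
      have hvv := G_le_vv lam mu L hdeg j (t+1)
      have hcr : c ∈ rowF lam mu j := by
        rw [rowF, Finset.mem_Icc]
        simp only [vv] at hvv
        exact ⟨h1, by omega⟩
      refine ⟨hcr, (fromL_spec lam mu L hdeg j hcr t).2 ?_⟩
      simp only [pthr]
      omega
  rw [hfil, Int.card_Icc]
  have hmono : uu mu k j ≤ G mu L j (t+1) := by
    have h0 : G mu L j 0 = uu mu k j := by simp [G]
    rw [← h0]
    exact G_mono L j (by omega)
  simp only [uu] at hmono ⊢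
  omega

lemma cnt_fromL (L : Fin k → ℕ →₀ ℕ) (hdeg : degOK k lam mu 1 L) (j : Fin k) (n : ℕ) :
    cnt lam mu (fromL lam mu L) j n = L j n := by
  have A : ∀ t : ℕ, ((∑ s ∈ Finset.range (t+1), cnt lam mu (fromL lam mu L) j s : ℕ) : ℤ)
      = ∑ s ∈ Finset.range (t+1), ((L j) s : ℤ) := by
    intro t
    rw [sum_cnt_le lam mu (fromL lam mu L) j t, filter_fromL_card lam mu L hdeg j t]
    simp [G]
  rcases Nat.eq_zero_or_pos n with rfl | hn
  · have := A 0
    simp only [Nat.zero_add, Finset.sum_range_one, Nat.cast_inj] at this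
    exact_mod_cast this
  · have h1 := A n
    have h2 := A (n-1)
    have he : n - 1 + 1 = n := by omega
    rw [he] at h2
    rw [Finset.sum_range_succ, Finset.sum_range_succ (fun s => ((L j) s : ℤ)) n] at h1
    push_cast at h1 h2 ⊢
    omega

lemma toL_fromL (L : Fin k → ℕ →₀ ℕ) (hdeg : degOK k lam mu 1 L) :
    (fun j : Fin k => toLrow lam mu (fromL lam mu L) j) = L := by
  funext j
  ext n
  show cnt lam mu (fromL lam mu L) j n = L j n
  exact cnt_fromL lam mu L hdeg j n

lemma fromL_toL (hsub : ∀ i : ℕ, mu.part i ≤ lam.part i)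
    (hlk : ∀ i : ℕ, k < i → lam.part i = 0) (T : Box → ℕ)
    (hssyt : IsSSYT (skewCells lam mu) T) :
    fromL lam mu (fun j : Fin k => toLrow lam mu T j) = T := by
  funext b
  by_cases hb : b ∈ skewCells lam mu
  · obtain ⟨j, c, rfl, hc⟩ := mem_skew_rep lam mu hlk hb
    have hiff : ∀ t : ℕ, fromL lam mu (fun j : Fin k => toLrow lam mu T j)
        (((j.1 : ℤ) + 1), c) ≤ t ↔ T (((j.1 : ℤ) + 1), c) ≤ t := by
      intro t
      rw [fromL_spec lam mu _ (degOK_toL lam mu hsub T) j hc t]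
      rw [thresh_ssyt lam mu T hssyt j hc t]
      rfl
    have h1 := (hiff _).1 le_rfl
    have h2 := (hiff _).2 le_rfl
    omega
  · rw [fromL_zero lam mu _ b hb, hssyt.2.2 b hb]

theorem schur_side (hsub : ∀ i : ℕ, mu.part i ≤ lam.part i)
    (hlk : ∀ i : ℕ, k < i → lam.part i = 0) (μ0 : ℕ →₀ ℕ) :
    schur (skewCells lam mu) μ0
      = ((((Finset.univ : Finset (Fin k)).finsuppAntidiag μ0).filter
          (fun L : Fin k →₀ (ℕ →₀ ℕ) => degOK k lam mu 1 ⇑L ∧ ¬ Cross mu ⇑L)).card : ℤ) := by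
  classical
  show (({T : Box → ℕ | IsSSYT (skewCells lam mu) T ∧
      ∀ n : ℕ, μ0 n = {b ∈ skewCells lam mu | T b = n}.ncard}.ncard : ℕ) : ℤ) = _
  congr 1
  set S := {T : Box → ℕ | IsSSYT (skewCells lam mu) T ∧
      ∀ n : ℕ, μ0 n = {b ∈ skewCells lam mu | T b = n}.ncard} with hS
  set NC := (((Finset.univ : Finset (Fin k)).finsuppAntidiag μ0).filter
      (fun L : Fin k →₀ (ℕ →₀ ℕ) => degOK k lam mu 1 ⇑L ∧ ¬ Cross mu ⇑L)) with hNC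
  set F : (Box → ℕ) → (Fin k →₀ (ℕ →₀ ℕ)) :=
    fun T => Finsupp.equivFunOnFinite.symm (fun j => toLrow lam mu T j) with hF
  have hcoeF : ∀ T, ⇑(F T) = fun j : Fin k => toLrow lam mu T j := fun T => rfl
  have hmaps : ∀ T ∈ S, F T ∈ NC := by
    intro T hT
    obtain ⟨hssyt, hcont⟩ := hT
    refine Finset.mem_filter.2 ⟨Finset.mem_finsuppAntidiag.2 ⟨?_, by simp⟩, ?_, ?_⟩
    · ext n
      rw [Finsupp.finset_sum_apply]
      have : ∀ j : Fin k, (F T) j n = cnt lam mu T j n := fun j => rfl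
      rw [Finset.sum_congr rfl (fun j _ => this j)]
      rw [← ncard_level lam mu hlk T n]
      exact (hcont n).symm
    · rw [hcoeF]
      exact degOK_toL lam mu hsub T
    · rw [hcoeF]
      exact noncross_toL lam mu hsub T hssyt
  have hinj : Set.InjOn F S := by
    intro T1 h1 T2 h2 he
    have he' : (fun j : Fin k => toLrow lam mu T1 j) = (fun j : Fin k => toLrow lam mu T2 j) := by
      rw [← hcoeF, ← hcoeF, he]
    calc T1 = fromL lam mu (fun j : Fin k => toLrow lam mu T1 j) :=
          (fromL_toL lam mu hsub hlk T1 h1.1).symm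
      _ = fromL lam mu (fun j : Fin k => toLrow lam mu T2 j) := by rw [he']
      _ = T2 := fromL_toL lam mu hsub hlk T2 h2.1
  have hsurj : Set.SurjOn F S ↑NC := by
    intro L hL
    rw [Finset.mem_coe, hNC, Finset.mem_filter] at hL
    obtain ⟨hmem, hdeg, hnc⟩ := hL
    rw [Finset.mem_finsuppAntidiag] at hmem
    refine ⟨fromL lam mu ⇑L, ⟨ssyt_fromL lam mu hlk ⇑L hdeg hnc, ?_⟩, ?_⟩
    · intro n
      rw [ncard_level lam mu hlk _ n]
      have : ∀ j : Fin k, cnt lam mu (fromL lam mu ⇑L) j n = L j n :=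
        fun j => cnt_fromL lam mu ⇑L hdeg j n
      rw [Finset.sum_congr rfl (fun j _ => this j)]
      rw [← Finsupp.finset_sum_apply]
      rw [hmem.1]
    · rw [hF]
      simp only
      rw [toL_fromL lam mu ⇑L hdeg]
      exact Finsupp.equivFunOnFinite.symm_apply_apply L
  have hbij : Set.BijOn F S ↑NC := ⟨hmaps, hinj, hsurj⟩
  calc S.ncard = (F '' S).ncard := (Set.ncard_image_of_injOn hinj).symm
    _ = (↑NC : Set (Fin k →₀ (ℕ →₀ ℕ))).ncard := by rw [hbij.image_eq]
    _ = NC.card := Set.ncard_coe_finset NC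
end DirB2

end JT

/-- **Jacobi–Trudi identity.** For partitions `μ ⊆ λ` with at most `k`
parts, `s_{λ/μ} = det( h_{λ_i - μ_j - i + j} )_{1 ≤ i, j ≤ k}`. -/
theorem jacobi_trudi
    (k : ℕ) (lam mu : Partition')
    (hsub : ∀ i : ℕ, mu.part i ≤ lam.part i)
    (hlk : ∀ i : ℕ, k < i → lam.part i = 0) (hmk : ∀ i : ℕ, k < i → mu.part i = 0) :
    schur (skewCells lam mu) =
      Matrix.det (Matrix.of fun i j : Fin k =>
        hSym ((lam.part ((i : ℕ) + 1) : ℤ) - (mu.part ((j : ℕ) + 1) : ℤ)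
          - ((i : ℕ) + 1 : ℤ) + ((j : ℕ) + 1 : ℤ))) := by
  apply MvPowerSeries.ext
  intro μ0
  have h1 := JT.coeff_det k lam mu μ0
  have h2 := JT.det_side (k := k) lam mu μ0
  have h3 := JT.schur_side (k := k) lam mu hsub hlk μ0
  show schur (skewCells lam mu) μ0 = _
  rw [h3, h1, ← h2]
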